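/- arXiv:1506.03798 — 6 statements merged into one kernel-verified Lean document; each statement's English description precedes it below -/
import Mathlib

section
/- If w is a permutation of {1,...,n}, 1 < i < n, and d_i(w) ≠ w, then the inverse descent signatures of w and x = d_i(w) satisfy: σ(w)_{i-1} = -σ(x)_{i-1}, σ(w)_i = -σ(x)_i, and σ(w)_h = σ(x)_h for all h with h < i-2 or h > i+1. -/
/-!  Permutations of `{1,…,n}` are modelled as `Equiv.Perm (Fin n)` with 0-based
values: the value `v : Fin n` stands for the paper's value `v+1`, and
`w.symm v` is the position of the value `v` in one-line notation.
`dmove n i` is the paper's elementary dual equivalence involution `d_{i+1}`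
(so `i` ranges over `1 ≤ i` and `i + 1 < n`, matching the paper's `1 < i+1 < n`),
and `dtmove n i` is the twisted move `d̃_{i+1}`. -/

/-- Haiman's elementary dual equivalence move: if the position of the middle
value `i` lies between the positions of `i-1` and `i+1`, do nothing; otherwise
interchange the value `i` with whichever of `i-1, i+1` is positioned further
from it. -/
def dmove (n : ℕ) (i : ℕ) (w : Equiv.Perm (Fin n)) : Equiv.Perm (Fin n) :=
  if h : 1 ≤ i ∧ i + 1 < n then
    let a : Fin n := ⟨i - 1, by omega⟩
    let b : Fin n := ⟨i, by omega⟩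
    let c : Fin n := ⟨i + 1, by omega⟩
    let pa := w.symm a
    let pb := w.symm b
    let pc := w.symm c
    if (pa < pb ∧ pb < pc) ∨ (pc < pb ∧ pb < pa) then w
    else if pb < pa ∧ pb < pc then
      (if pa < pc then Equiv.swap c b else Equiv.swap a b) * w
    else
      (if pa < pc then Equiv.swap a b else Equiv.swap c b) * w
  else w

/-- The twisted elementary dual equivalence move: if the position of the middle
value `i` lies between those of `i-1` and `i+1`, do nothing; otherwise
cyclically rotate the three values `i-1, i, i+1` so that `i` moves to the
other side of `i-1` and `i+1`, the outer two keeping their relative order. -/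
def dtmove (n : ℕ) (i : ℕ) (w : Equiv.Perm (Fin n)) : Equiv.Perm (Fin n) :=
  if h : 1 ≤ i ∧ i + 1 < n then
    let a : Fin n := ⟨i - 1, by omega⟩
    let b : Fin n := ⟨i, by omega⟩
    let c : Fin n := ⟨i + 1, by omega⟩
    let pa := w.symm a
    let pb := w.symm b
    let pc := w.symm c
    let u := if pa < pc then a else c   -- the outer value occurring first
    let v := if pa < pc then c else a   -- the outer value occurring last
    if (pa < pb ∧ pb < pc) ∨ (pc < pb ∧ pb < pa) then w
    else if pb < pa ∧ pb < pc then
      (Equiv.swap b u * Equiv.swap u v) * w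
    else
      (Equiv.swap u b * Equiv.swap b v) * w
  else w

/-- The inverse descent signature: `sig n w j = +1` if the (0-based) value `j`
occurs to the left of the value `j+1` in the one-line notation of `w`, and `-1`
otherwise.  (`sig n w (j-1)` is the paper's `σ(w)_j`.) -/
def sig (n : ℕ) (w : Equiv.Perm (Fin n)) (j : ℕ) : ℤ :=
  if h : j + 1 < n then
    if w.symm ⟨j, by omega⟩ < w.symm ⟨j + 1, h⟩ then 1 else -1
  else 1

lemma swap_mul_symm {n : ℕ} (p q : Fin n) (w : Equiv.Perm (Fin n)) (v : Fin n) :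
    (Equiv.swap p q * w).symm v = w.symm (Equiv.swap p q v) := by
  simp [Equiv.Perm.mul_def, Equiv.symm_trans_apply]

lemma sig_eq {n : ℕ} (w : Equiv.Perm (Fin n)) (j : ℕ) (h : j + 1 < n) (u v : Fin n)
    (hu : u.val = j) (hv : v.val = j + 1) :
    sig n w j = if w.symm u < w.symm v then 1 else -1 := by
  rcases u with ⟨uv, hul⟩
  rcases v with ⟨vv, hvl⟩
  simp only at hu hv
  subst hu; subst hv
  rw [sig, dif_pos h]

lemma sig_swap {n : ℕ} (w : Equiv.Perm (Fin n)) (p q : Fin n) (h : ℕ)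
    (hp : p.val ≠ h ∧ p.val ≠ h + 1) (hq : q.val ≠ h ∧ q.val ≠ h + 1) :
    sig n (Equiv.swap p q * w) h = sig n w h := by
  unfold sig
  split
  · rw [swap_mul_symm, swap_mul_symm,
      Equiv.swap_apply_of_ne_of_ne (Fin.ne_of_val_ne (by simpa using hp.1.symm))
        (Fin.ne_of_val_ne (by simpa using hq.1.symm)),
      Equiv.swap_apply_of_ne_of_ne (Fin.ne_of_val_ne (by simpa using hp.2.symm))
        (Fin.ne_of_val_ne (by simpa using hq.2.symm))]
  · rfl


/-- if `x = d_i(w) ≠ w`, then the inverse descent signatures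
satisfy `σ(w)_{i-1} = -σ(x)_{i-1}`, `σ(w)_i = -σ(x)_i`, and `σ(w)_h = σ(x)_h`
for `h < i-2` and `h > i+1`.  (With our 0-based middle value `i`, the paper's
`σ_{i-1}, σ_i` are `sig n _ (i-1), sig n _ i`, and the preserved indices `h`
are those with `h + 3 ≤ i` or `i + 2 ≤ h`.) -/
theorem dmove_signature (n i : ℕ) (hi : 1 ≤ i) (hin : i + 1 < n)
    (w : Equiv.Perm (Fin n)) (hx : dmove n i w ≠ w) :
    sig n w (i - 1) = -sig n (dmove n i w) (i - 1) ∧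
    sig n w i = -sig n (dmove n i w) i ∧
    ∀ h : ℕ, (h + 3 ≤ i ∨ i + 2 ≤ h) → sig n w h = sig n (dmove n i w) h := by
  set a : Fin n := ⟨i - 1, by omega⟩ with ha
  set b : Fin n := ⟨i, by omega⟩ with hb
  set c : Fin n := ⟨i + 1, by omega⟩ with hc
  have hab : a ≠ b := by simp only [ha, hb, ne_eq, Fin.mk.injEq]; omega
  have hbc : b ≠ c := by simp only [hb, hc, ne_eq, Fin.mk.injEq]; omega
  have hac : a ≠ c := by simp only [ha, hc, ne_eq, Fin.mk.injEq]; omega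
  have pab : w.symm a ≠ w.symm b := fun e => hab (w.symm.injective e)
  have pbc : w.symm b ≠ w.symm c := fun e => hbc (w.symm.injective e)
  have pac : w.symm a ≠ w.symm c := fun e => hac (w.symm.injective e)
  have hd : dmove n i w =
      if (w.symm a < w.symm b ∧ w.symm b < w.symm c) ∨
         (w.symm c < w.symm b ∧ w.symm b < w.symm a) then w
      else if w.symm b < w.symm a ∧ w.symm b < w.symm c then
        (if w.symm a < w.symm c then Equiv.swap c b else Equiv.swap a b) * w
      else
        (if w.symm a < w.symm c then Equiv.swap a b else Equiv.swap c b) * w := by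
    rw [dmove, dif_pos ⟨hi, hin⟩]
  have hmid : ¬((w.symm a < w.symm b ∧ w.symm b < w.symm c) ∨
      (w.symm c < w.symm b ∧ w.symm b < w.symm a)) := by
    intro hm
    exact hx (by rw [hd, if_pos hm])
  rw [if_neg hmid] at hd
  -- turn Fin comparisons into Nat comparisons for omega
  have key : (w.symm b < w.symm a ∧ w.symm b < w.symm c) ∨
      (w.symm a < w.symm b ∧ w.symm c < w.symm b) := by
    simp only [Fin.lt_def] at hmid ⊢
    simp only [Ne, Fin.ext_iff] at pab pbc pac
    omega
  have sigW1 : sig n w (i - 1) = if w.symm a < w.symm b then 1 else -1 :=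
    sig_eq w (i-1) (by omega) a b (by simp [ha]) (by simp [hb]; omega)
  have sigW2 : sig n w i = if w.symm b < w.symm c then 1 else -1 :=
    sig_eq w i (by omega) b c (by simp [hb]) (by simp [hc])
  have habv : a.val = i - 1 := rfl
  have hbv : b.val = i := rfl
  have hcv : c.val = i + 1 := rfl
  rcases key with ⟨h1, h2⟩ | ⟨h1, h2⟩
  · rw [if_pos ⟨h1, h2⟩] at hd
    rcases lt_or_gt_of_ne pac with hlt | hgt
    · rw [if_pos hlt] at hd
      have sx : ∀ v, (dmove n i w).symm v = w.symm (Equiv.swap c b v) := by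
        intro v; rw [hd, swap_mul_symm]
      have sXa : (dmove n i w).symm a = w.symm a := by
        rw [sx, Equiv.swap_apply_of_ne_of_ne hac hab]
      have sXb : (dmove n i w).symm b = w.symm c := by
        rw [sx, Equiv.swap_apply_right]
      have sXc : (dmove n i w).symm c = w.symm b := by
        rw [sx, Equiv.swap_apply_left]
      have sigX1 : sig n (dmove n i w) (i - 1) =
          if w.symm a < w.symm c then 1 else -1 := by
        rw [sig_eq (dmove n i w) (i-1) (by omega) a b (by simp [ha]) (by simp [hb]; omega),
          sXa, sXb]
      have sigX2 : sig n (dmove n i w) i =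
          if w.symm c < w.symm b then 1 else -1 := by
        rw [sig_eq (dmove n i w) i (by omega) b c (by simp [hb]) (by simp [hc]), sXb, sXc]
      refine ⟨?_, ?_, ?_⟩
      · rw [sigW1, sigX1, if_neg (by exact fun h => absurd h1 (not_lt.2 h.le)), if_pos hlt]
        all_goals norm_num
      · rw [sigW2, sigX2, if_pos h2, if_neg (by exact fun h => absurd h2 (not_lt.2 h.le))]
        all_goals norm_num
      · intro h hh
        rw [hd, sig_swap w c b h ⟨by simp [hcv]; omega, by simp [hcv]; omega⟩
          ⟨by simp [hbv]; omega, by simp [hbv]; omega⟩]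
    · rw [if_neg (not_lt.2 hgt.le)] at hd
      have sx : ∀ v, (dmove n i w).symm v = w.symm (Equiv.swap a b v) := by
        intro v; rw [hd, swap_mul_symm]
      have sXa : (dmove n i w).symm a = w.symm b := by rw [sx, Equiv.swap_apply_left]
      have sXb : (dmove n i w).symm b = w.symm a := by rw [sx, Equiv.swap_apply_right]
      have sXc : (dmove n i w).symm c = w.symm c := by
        rw [sx, Equiv.swap_apply_of_ne_of_ne (Ne.symm hac) (Ne.symm hbc)]
      have sigX1 : sig n (dmove n i w) (i - 1) =
          if w.symm b < w.symm a then 1 else -1 := by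
        rw [sig_eq (dmove n i w) (i-1) (by omega) a b (by simp [ha]) (by simp [hb]; omega),
          sXa, sXb]
      have sigX2 : sig n (dmove n i w) i =
          if w.symm a < w.symm c then 1 else -1 := by
        rw [sig_eq (dmove n i w) i (by omega) b c (by simp [hb]) (by simp [hc]), sXb, sXc]
      refine ⟨?_, ?_, ?_⟩
      · rw [sigW1, sigX1, if_neg (by exact fun h => absurd h1 (not_lt.2 h.le)), if_pos h1]
        all_goals norm_num
      · rw [sigW2, sigX2, if_pos h2, if_neg (not_lt.2 hgt.le)]
        all_goals norm_num
      · intro h hh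
        rw [hd, sig_swap w a b h ⟨by simp [habv]; omega, by simp [habv]; omega⟩
          ⟨by simp [hbv]; omega, by simp [hbv]; omega⟩]
  · rw [if_neg (by exact fun h => absurd h1 (not_lt.2 h.1.le))] at hd
    rcases lt_or_gt_of_ne pac with hlt | hgt
    · rw [if_pos hlt] at hd
      have sx : ∀ v, (dmove n i w).symm v = w.symm (Equiv.swap a b v) := by
        intro v; rw [hd, swap_mul_symm]
      have sXa : (dmove n i w).symm a = w.symm b := by rw [sx, Equiv.swap_apply_left]
      have sXb : (dmove n i w).symm b = w.symm a := by rw [sx, Equiv.swap_apply_right]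
      have sXc : (dmove n i w).symm c = w.symm c := by
        rw [sx, Equiv.swap_apply_of_ne_of_ne (Ne.symm hac) (Ne.symm hbc)]
      have sigX1 : sig n (dmove n i w) (i - 1) =
          if w.symm b < w.symm a then 1 else -1 := by
        rw [sig_eq (dmove n i w) (i-1) (by omega) a b (by simp [ha]) (by simp [hb]; omega),
          sXa, sXb]
      have sigX2 : sig n (dmove n i w) i =
          if w.symm a < w.symm c then 1 else -1 := by
        rw [sig_eq (dmove n i w) i (by omega) b c (by simp [hb]) (by simp [hc]), sXb, sXc]
      refine ⟨?_, ?_, ?_⟩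
      · rw [sigW1, sigX1, if_pos h1, if_neg (by exact fun h => absurd h1 (not_lt.2 h.le))]
        all_goals norm_num
      · rw [sigW2, sigX2, if_neg (by exact fun h => absurd h2 (not_lt.2 h.le)), if_pos hlt]
        all_goals norm_num
      · intro h hh
        rw [hd, sig_swap w a b h ⟨by simp [habv]; omega, by simp [habv]; omega⟩
          ⟨by simp [hbv]; omega, by simp [hbv]; omega⟩]
    · rw [if_neg (not_lt.2 hgt.le)] at hd
      have sx : ∀ v, (dmove n i w).symm v = w.symm (Equiv.swap c b v) := by
        intro v; rw [hd, swap_mul_symm]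
      have sXa : (dmove n i w).symm a = w.symm a := by
        rw [sx, Equiv.swap_apply_of_ne_of_ne hac hab]
      have sXb : (dmove n i w).symm b = w.symm c := by rw [sx, Equiv.swap_apply_right]
      have sXc : (dmove n i w).symm c = w.symm b := by rw [sx, Equiv.swap_apply_left]
      have sigX1 : sig n (dmove n i w) (i - 1) =
          if w.symm a < w.symm c then 1 else -1 := by
        rw [sig_eq (dmove n i w) (i-1) (by omega) a b (by simp [ha]) (by simp [hb]; omega),
          sXa, sXb]
      have sigX2 : sig n (dmove n i w) i =
          if w.symm c < w.symm b then 1 else -1 := by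
        rw [sig_eq (dmove n i w) i (by omega) b c (by simp [hb]) (by simp [hc]), sXb, sXc]
      refine ⟨?_, ?_, ?_⟩
      · rw [sigW1, sigX1, if_pos h1, if_neg (not_lt.2 hgt.le)]
        all_goals norm_num
      · rw [sigW2, sigX2, if_neg (by exact fun h => absurd h2 (not_lt.2 h.le)), if_pos h2]
        all_goals norm_num
      · intro h hh
        rw [hd, sig_swap w c b h ⟨by simp [hcv]; omega, by simp [hcv]; omega⟩
          ⟨by simp [hbv]; omega, by simp [hbv]; omega⟩]
end

section
/- For a permutation w of {1,...,n} and 1 < i < n: d_i(w) ≠ w if and only if σ(w)_{i-1} = -σ(w)_i, where σ is the inverse descent signature. Equivalently, d_i fixes w exactly when i-1 and i+1 lie on the same side of i in the inverse descent sense. -/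
/-- `d_i(w) ≠ w` if and only if `σ(w)_{i-1} = -σ(w)_i`. -/
theorem dmove_fixed_iff (n i : ℕ) (hi : 1 ≤ i) (hin : i + 1 < n)
    (w : Equiv.Perm (Fin n)) :
    dmove n i w ≠ w ↔ sig n w (i - 1) = -sig n w i := by
  have h : 1 ≤ i ∧ i + 1 < n := ⟨hi, hin⟩
  unfold dmove
  rw [dif_pos h]
  simp only []
  set a : Fin n := ⟨i - 1, by omega⟩ with ha
  set b : Fin n := ⟨i, by omega⟩ with hb
  set c : Fin n := ⟨i + 1, by omega⟩ with hc
  have hab : a ≠ b := by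
    simp only [ha, hb, ne_eq, Fin.mk.injEq]
    omega
  have hcb : c ≠ b := by
    simp only [hc, hb, ne_eq, Fin.mk.injEq]
    omega
  have hpab : w.symm a ≠ w.symm b := fun e => hab (w.symm.injective e)
  have hpcb : w.symm c ≠ w.symm b := fun e => hcb (w.symm.injective e)
  have sig1 : sig n w (i - 1) = if w.symm a < w.symm b then 1 else -1 := by
    have hlt : i - 1 + 1 < n := by omega
    have e2 : (⟨i - 1 + 1, hlt⟩ : Fin n) = b := Fin.ext (by simp [hb]; omega)
    simp only [sig, dif_pos hlt, e2]
    rfl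
  have sig2 : sig n w i = if w.symm b < w.symm c then 1 else -1 := by
    simp only [sig, dif_pos hin]
    rfl
  rw [sig1, sig2]
  have hswap1 : Equiv.swap c b * w ≠ w := by
    intro e
    rw [mul_eq_right] at e
    exact hcb (Equiv.swap_eq_one_iff.mp e)
  have hswap2 : Equiv.swap a b * w ≠ w := by
    intro e
    rw [mul_eq_right] at e
    exact hab (Equiv.swap_eq_one_iff.mp e)
  rcases lt_trichotomy (w.symm a) (w.symm b) with h1 | h1 | h1
  · rcases lt_trichotomy (w.symm b) (w.symm c) with h2 | h2 | h2
    · rw [if_pos (Or.inl ⟨h1, h2⟩), if_pos h1, if_pos h2]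
      simp
    · exact (hpcb h2.symm).elim
    · have hnot1 : ¬((w.symm a < w.symm b ∧ w.symm b < w.symm c) ∨
          (w.symm c < w.symm b ∧ w.symm b < w.symm a)) := by
        rintro (⟨-, h⟩ | ⟨-, h⟩)
        · exact absurd h (not_lt.mpr h2.le)
        · exact absurd h (not_lt.mpr h1.le)
      have hnot2 : ¬(w.symm b < w.symm a ∧ w.symm b < w.symm c) := by
        rintro ⟨h, -⟩; exact absurd h (not_lt.mpr h1.le)
      rw [if_neg hnot1, if_neg hnot2, if_pos h1, if_neg (not_lt.mpr h2.le)]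
      norm_num
      split_ifs
      exacts [hswap2, hswap1]
  · exact (hpab h1).elim
  · rcases lt_trichotomy (w.symm b) (w.symm c) with h2 | h2 | h2
    · have hnot1 : ¬((w.symm a < w.symm b ∧ w.symm b < w.symm c) ∨
          (w.symm c < w.symm b ∧ w.symm b < w.symm a)) := by
        rintro (⟨h, -⟩ | ⟨h, -⟩)
        · exact absurd h (not_lt.mpr h1.le)
        · exact absurd h (not_lt.mpr h2.le)
      rw [if_neg hnot1, if_pos ⟨h1, h2⟩, if_neg (not_lt.mpr h1.le), if_pos h2]
      norm_num
      split_ifs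
      exacts [hswap1, hswap2]
    · exact (hpcb h2.symm).elim
    · rw [if_pos (Or.inr ⟨h2, h1⟩), if_neg (not_lt.mpr h1.le),
        if_neg (not_lt.mpr h2.le)]
      simp
end

section
/- Every standard Young tableau T of partition shape λ of size n satisfies α(T) ≤ λ in dominance order, where α(T) is the composition of n determined by the descent set of T; moreover α(T) = λ (as a composition equal to the partition λ) if and only if T is the superstandard tableau T_λ. -/
/-!  Standard Young tableaux are modelled as functions `T : ℕ × ℕ → ℕ`
(cells `(row, col)` in English notation) that vanish outside the diagram and
restrict to a bijection from the cells onto `{1,…,n}`, increasing along rows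
and columns.  A descent of `T` is an `i` such that `i+1` lies in a strictly
lower row (larger row index) than `i`. -/

/-- `T` is a standard Young tableau of shape `μ`. -/
def IsStandardYT (μ : YoungDiagram) (T : ℕ × ℕ → ℕ) : Prop :=
  Set.BijOn T ↑μ.cells (Set.Icc 1 μ.cells.card) ∧
  (∀ c : ℕ × ℕ, c ∉ μ.cells → T c = 0) ∧
  (∀ r c : ℕ, (r, c) ∈ μ.cells → (r, c + 1) ∈ μ.cells → T (r, c) < T (r, c + 1)) ∧
  (∀ r c : ℕ, (r, c) ∈ μ.cells → (r + 1, c) ∈ μ.cells → T (r, c) < T (r + 1, c))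

open Classical in
/-- The descent set of a standard Young tableau: those `i ∈ [n-1]` such that
`i + 1` lies in a strictly lower row than `i`. -/
noncomputable def DesY (μ : YoungDiagram) (T : ℕ × ℕ → ℕ) : Finset ℕ :=
  (Finset.Icc 1 (μ.cells.card - 1)).filter fun i =>
    ∃ c1 ∈ μ.cells, ∃ c2 ∈ μ.cells, T c1 = i ∧ T c2 = i + 1 ∧ c1.1 < c2.1

/-- `α₁ + ⋯ + α_k` for the descent composition `α(T)` of a standard tableau of
size `n`: the `k`-th smallest element of `Des(T) ∪ {n}` (equal to `n` for `k`
beyond the number of parts). -/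
noncomputable def alphaPartial (μ : YoungDiagram) (T : ℕ × ℕ → ℕ) (k : ℕ) : ℕ :=
  ((insert μ.cells.card (DesY μ T)).sort (· ≤ ·)).getD (k - 1) μ.cells.card

/-- `λ₁ + ⋯ + λ_k` for the partition `λ`, i.e. the number of cells in the
first `k` rows. -/
def rowPartial (μ : YoungDiagram) (k : ℕ) : ℕ :=
  (μ.cells.filter fun c => c.1 < k).card

/-! ### Auxiliary lemmas -/

/-- At most `k` elements of `s` lie strictly below the `(k+1)`-st smallest
element of `s`. -/
lemma aux_card_filter_lt_getD (s : Finset ℕ) (d k : ℕ) :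
    (s.filter (· < (s.sort (· ≤ ·)).getD k d)).card ≤ k := by
  set L := s.sort (· ≤ ·) with hL
  rcases lt_or_ge k L.length with h | h
  · rw [List.getD_eq_getElem _ _ h]
    have hsub : s.filter (· < L.get ⟨k, h⟩) ⊆ (L.take k).toFinset := by
      intro x hx
      obtain ⟨hxs, hxlt⟩ := Finset.mem_filter.mp hx
      have hxL : x ∈ L := by rw [hL, Finset.mem_sort]; exact hxs
      obtain ⟨i, hi⟩ := List.mem_iff_get.mp hxL
      have hik : (i : ℕ) < k := by
        by_contra hik
        push_neg at hik
        have : L.get ⟨k, h⟩ ≤ L.get i := by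
          rcases eq_or_lt_of_le hik with he | hlt
          · exact le_of_eq (congrArg L.get (Fin.ext he))
          · exact le_of_lt ((s.sortedLT_sort).pairwise.rel_get_of_lt (Fin.lt_def.mpr hlt))
        omega
      rw [List.mem_toFinset]
      have hlen : (i : ℕ) < (L.take k).length := by
        rw [List.length_take]
        exact lt_min hik i.isLt
      have : (L.take k)[(i : ℕ)]'hlen = x := by
        rw [List.getElem_take]
        exact hi ▸ rfl
      exact this ▸ List.getElem_mem hlen
    calc (s.filter (· < L.get ⟨k, h⟩)).card ≤ (L.take k).toFinset.card :=
          Finset.card_le_card hsub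
      _ ≤ (L.take k).length := List.toFinset_card_le _
      _ ≤ k := by rw [List.length_take]; omega
  · rw [List.getD_eq_default _ _ h]
    calc (s.filter (· < d)).card ≤ s.card := Finset.card_filter_le _ _
      _ = L.length := (Finset.length_sort _).symm
      _ ≤ k := h

/-- If fewer than `k + 1` elements of `s` lie strictly below `v`, then the
`(k+1)`-st smallest element of `s` is at least `v`. -/
lemma aux_le_getD (s : Finset ℕ) (d k v : ℕ) (hd : v ≤ d)
    (hc : (s.filter (· < v)).card ≤ k) : v ≤ (s.sort (· ≤ ·)).getD k d := by
  set L := s.sort (· ≤ ·) with hL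
  rcases lt_or_ge k L.length with h | h
  · rw [List.getD_eq_getElem _ _ h]
    by_contra hlt
    push_neg at hlt
    have hsub : (L.take (k + 1)).toFinset ⊆ s.filter (· < v) := by
      intro x hx
      rw [List.mem_toFinset] at hx
      have hxL : x ∈ L := List.take_subset _ _ hx
      have hxs : x ∈ s := by rwa [hL, Finset.mem_sort] at hxL
      obtain ⟨i, hi⟩ := List.mem_iff_get.mp (show x ∈ L.take (k+1) from hx)
      have hlen : (L.take (k+1)).length = min (k+1) L.length := List.length_take
      have hik : (i : ℕ) ≤ k := by
        have := i.isLt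
        omega
      have hgl : (L.take (k+1)).get i = L.get ⟨i, by have := i.isLt; omega⟩ := by
        simp [List.getElem_take]
      have hle : x ≤ L.get ⟨k, h⟩ := by
        rw [← hi, hgl]
        rcases eq_or_lt_of_le hik with he | hlt'
        · exact le_of_eq (congrArg L.get (Fin.ext he))
        · exact le_of_lt ((s.sortedLT_sort).pairwise.rel_get_of_lt (Fin.lt_def.mpr hlt'))
      exact Finset.mem_filter.mpr ⟨hxs, by have : L.get ⟨k, h⟩ = L[k] := rfl; omega⟩
    have hnd : (L.take (k + 1)).Nodup := (List.take_sublist _ _).nodup (s.sort_nodup _)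
    have hcard : (L.take (k + 1)).toFinset.card = k + 1 := by
      rw [List.toFinset_card_of_nodup hnd, List.length_take]
      omega
    have := Finset.card_le_card hsub
    omega
  · rw [List.getD_eq_default _ _ h]
    exact hd

lemma rowPartial_zero (μ : YoungDiagram) : rowPartial μ 0 = 0 := by
  simp [rowPartial]

lemma rowPartial_succ (μ : YoungDiagram) (r : ℕ) :
    rowPartial μ (r + 1) = rowPartial μ r + μ.rowLen r := by
  have hsplit : (μ.cells.filter fun c => c.1 < r + 1) =
      (μ.cells.filter fun c => c.1 < r) ∪ μ.row r := by
    ext c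
    simp only [Finset.mem_filter, Finset.mem_union, YoungDiagram.mem_row_iff,
      YoungDiagram.mem_cells]
    by_cases hc : c ∈ μ <;> simp [hc] <;> omega
  have hdisj : Disjoint (μ.cells.filter fun c => c.1 < r) (μ.row r) := by
    rw [Finset.disjoint_left]
    intro c hc hc'
    have h1 := (Finset.mem_filter.mp hc).2
    have h2 := (YoungDiagram.mem_row_iff.mp hc').2
    omega
  rw [rowPartial, rowPartial, hsplit, Finset.card_union_of_disjoint hdisj,
    YoungDiagram.rowLen_eq_card]

lemma rowPartial_mono (μ : YoungDiagram) : Monotone (rowPartial μ) := by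
  intro a b hab
  apply Finset.card_le_card
  intro c hc
  obtain ⟨h1, h2⟩ := Finset.mem_filter.mp hc
  exact Finset.mem_filter.mpr ⟨h1, lt_of_lt_of_le h2 hab⟩

lemma rowPartial_le_card (μ : YoungDiagram) (k : ℕ) : rowPartial μ k ≤ μ.cells.card :=
  Finset.card_filter_le _ _

lemma mem_insertDes_le (μ : YoungDiagram) (T : ℕ × ℕ → ℕ) {x : ℕ}
    (hx : x ∈ insert μ.cells.card (DesY μ T)) : x ≤ μ.cells.card := by
  rcases Finset.mem_insert.mp hx with rfl | hx
  · exact le_rfl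
  · have := Finset.mem_Icc.mp (Finset.mem_filter.mp hx).1
    omega

lemma alpha_le_card (μ : YoungDiagram) (T : ℕ × ℕ → ℕ) (k : ℕ) :
    alphaPartial μ T k ≤ μ.cells.card := by
  rw [alphaPartial]
  rcases lt_or_ge (k - 1) ((insert μ.cells.card (DesY μ T)).sort (· ≤ ·)).length with h | h
  · rw [List.getD_eq_getElem _ _ h]
    apply mem_insertDes_le μ T
    rw [← Finset.mem_sort (· ≤ ·)]
    exact List.getElem_mem _
  · rw [List.getD_eq_default _ _ h]

/-- Between two entries with the larger entry in a strictly lower row there is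
a descent. -/
lemma descent_between (μ : YoungDiagram) (T : ℕ × ℕ → ℕ) (hT : IsStandardYT μ T) :
    ∀ N a b, b ≤ a + N → a < b → ∀ p, p ∈ μ.cells → ∀ q, q ∈ μ.cells →
      T p = a → T q = b → p.1 < q.1 → ∃ d ∈ DesY μ T, a ≤ d ∧ d < b := by
  intro N
  induction N with
  | zero => intro a b h1 h2; omega
  | succ N ih =>
    intro a b hle hab p hp q hq hTp hTq hpq
    have hpn := hT.1.mapsTo (by exact_mod_cast hp)
    have hqn := hT.1.mapsTo (by exact_mod_cast hq)
    rw [Set.mem_Icc] at hpn hqn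
    have h1a : 1 ≤ a := hTp ▸ hpn.1
    have hbn : b ≤ μ.cells.card := hTq ▸ hqn.2
    rcases eq_or_lt_of_le (Nat.succ_le_of_lt hab) with he | hlt
    · -- b = a + 1, so a is a descent
      refine ⟨a, ?_, le_refl a, hab⟩
      simp only [DesY, Finset.mem_filter, Finset.mem_Icc]
      exact ⟨⟨h1a, by omega⟩, p, hp, q, hq, hTp, by omega, hpq⟩
    · -- a + 1 < b; find the cell of a + 1
      have hmem : (a + 1) ∈ Set.Icc 1 μ.cells.card := ⟨by omega, by omega⟩
      obtain ⟨p', hp', hTp'⟩ := hT.1.surjOn hmem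
      have hp'c : p' ∈ μ.cells := by exact_mod_cast hp'
      rcases lt_or_ge p.1 p'.1 with hcase | hcase
      · refine ⟨a, ?_, le_refl a, hab⟩
        simp only [DesY, Finset.mem_filter, Finset.mem_Icc]
        have : a + 1 ≤ μ.cells.card := hmem.2
        exact ⟨⟨h1a, by omega⟩, p, hp, p', hp'c, hTp, hTp', hcase⟩
      · obtain ⟨dd, hdd, hd1, hd2⟩ :=
          ih (a + 1) b (by omega) hlt p' hp'c q hq hTp' hTq (lt_of_le_of_lt hcase hpq)
        exact ⟨dd, hdd, by omega, hd2⟩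

/-- The row index of an entry is at most the number of descents below it. -/
lemma row_le_descents (μ : YoungDiagram) (T : ℕ × ℕ → ℕ) (hT : IsStandardYT μ T) :
    ∀ r c, (r, c) ∈ μ.cells → r ≤ ((DesY μ T).filter (· < T (r, c))).card := by
  intro r
  induction r with
  | zero => intro c _; exact Nat.zero_le _
  | succ r ih =>
    intro c hmem
    have hup : (r, c) ∈ μ.cells := by
      rw [YoungDiagram.mem_cells] at hmem ⊢
      exact μ.up_left_mem (by omega) le_rfl hmem
    have hv := hT.2.2.2 r c hup hmem
    obtain ⟨d, hd, hvd, hdb⟩ := descent_between μ T hT (T (r + 1, c)) (T (r, c)) (T (r + 1, c))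
      (by omega) hv (r, c) hup (r + 1, c) hmem rfl rfl (by omega)
    have hni : d ∉ (DesY μ T).filter (· < T (r, c)) := by
      intro hx
      have := (Finset.mem_filter.mp hx).2
      omega
    have hsub : insert d ((DesY μ T).filter (· < T (r, c))) ⊆
        (DesY μ T).filter (· < T (r + 1, c)) := by
      intro x hx
      rcases Finset.mem_insert.mp hx with rfl | hx
      · exact Finset.mem_filter.mpr ⟨hd, hdb⟩
      · obtain ⟨h1, h2⟩ := Finset.mem_filter.mp hx
        exact Finset.mem_filter.mpr ⟨h1, by omega⟩
    calc r + 1 ≤ ((DesY μ T).filter (· < T (r, c))).card + 1 := by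
          have := ih c hup; omega
      _ = (insert d ((DesY μ T).filter (· < T (r, c)))).card :=
          (Finset.card_insert_of_notMem hni).symm
      _ ≤ _ := Finset.card_le_card hsub

/-- If at most `k - 1` elements of `Des(T) ∪ {n}` lie below `a`, then every
entry of value at most `a` lies in the first `k` rows. -/
lemma row_lt_of_le (μ : YoungDiagram) (T : ℕ × ℕ → ℕ) (hT : IsStandardYT μ T)
    (k a : ℕ) (hk : 1 ≤ k)
    (ha : ((insert μ.cells.card (DesY μ T)).filter (· < a)).card ≤ k - 1) :
    ∀ p ∈ μ.cells, T p ≤ a → p.1 < k := by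
  intro p hp hpa
  by_contra hcon
  push_neg at hcon
  have h1 := row_le_descents μ T hT p.1 p.2 (by rwa [Prod.mk.eta])
  rw [Prod.mk.eta] at h1
  have hsub : (DesY μ T).filter (· < T p) ⊆
      (insert μ.cells.card (DesY μ T)).filter (· < a) := by
    intro x hx
    obtain ⟨hx1, hx2⟩ := Finset.mem_filter.mp hx
    exact Finset.mem_filter.mpr ⟨Finset.mem_insert_of_mem hx1, by omega⟩
  have := Finset.card_le_card hsub
  omega

lemma icc_subset_image (μ : YoungDiagram) (T : ℕ × ℕ → ℕ) (hT : IsStandardYT μ T)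
    (k a : ℕ) (ha : a ≤ μ.cells.card)
    (h : ∀ p ∈ μ.cells, T p ≤ a → p.1 < k) :
    Finset.Icc 1 a ⊆ (μ.cells.filter fun c => c.1 < k).image T := by
  intro m hm
  rw [Finset.mem_Icc] at hm
  have hmem : m ∈ Set.Icc 1 μ.cells.card := ⟨hm.1, le_trans hm.2 ha⟩
  obtain ⟨p, hp, hTp⟩ := hT.1.surjOn hmem
  have hpc : p ∈ μ.cells := by exact_mod_cast hp
  exact Finset.mem_image.mpr ⟨p, Finset.mem_filter.mpr ⟨hpc, h p hpc (by omega)⟩, hTp⟩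

/-- every standard Young tableau `T` of shape `λ` satisfies
`α(T) ≤ λ` in dominance order (partial sums of the descent composition are at
most those of `λ`), with equality of compositions (all partial sums agree) if
and only if `T` is the superstandard tableau `T_λ`, whose entry in cell
`(r, c)` is the number of cells in earlier rows plus `c + 1`. -/
theorem descent_composition_dominated (μ : YoungDiagram) (T : ℕ × ℕ → ℕ)
    (hT : IsStandardYT μ T) :
    (∀ k : ℕ, 1 ≤ k → alphaPartial μ T k ≤ rowPartial μ k) ∧
    ((∀ k : ℕ, 1 ≤ k → alphaPartial μ T k = rowPartial μ k) ↔
      ∀ c ∈ μ.cells, T c = rowPartial μ c.1 + c.2 + 1) := by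
  have hfilt : ∀ k : ℕ,
      ((insert μ.cells.card (DesY μ T)).filter (· < alphaPartial μ T k)).card ≤ k - 1 :=
    fun k => aux_card_filter_lt_getD (insert μ.cells.card (DesY μ T)) μ.cells.card (k - 1)
  have part1 : ∀ k : ℕ, 1 ≤ k → alphaPartial μ T k ≤ rowPartial μ k := by
    intro k hk
    have h2 := row_lt_of_le μ T hT k (alphaPartial μ T k) hk (hfilt k)
    have hsub := icc_subset_image μ T hT k (alphaPartial μ T k) (alpha_le_card μ T k) h2
    calc alphaPartial μ T k = (Finset.Icc 1 (alphaPartial μ T k)).card := by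
          rw [Nat.card_Icc]; omega
      _ ≤ ((μ.cells.filter fun c => c.1 < k).image T).card := Finset.card_le_card hsub
      _ ≤ (μ.cells.filter fun c => c.1 < k).card := Finset.card_image_le
  refine ⟨part1, ?_, ?_⟩
  · -- equality of all partial sums implies superstandard
    intro heq c hc
    have step1 : ∀ k : ℕ, 1 ≤ k → ∀ q ∈ μ.cells, q.1 < k → T q ≤ rowPartial μ k := by
      intro k hk q hq hqk
      have hfa : ((insert μ.cells.card (DesY μ T)).filter (· < rowPartial μ k)).card ≤ k - 1 := by
        have := hfilt k
        rwa [heq k hk] at this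
      have h2 := row_lt_of_le μ T hT k (rowPartial μ k) hk hfa
      have hsub := icc_subset_image μ T hT k (rowPartial μ k) (rowPartial_le_card μ k) h2
      have hcardim : ((μ.cells.filter fun c => c.1 < k).image T).card ≤
          (Finset.Icc 1 (rowPartial μ k)).card := by
        have h3 : ((μ.cells.filter fun c => c.1 < k).image T).card ≤
            (μ.cells.filter fun c => c.1 < k).card := Finset.card_image_le
        rw [Nat.card_Icc]
        have h4 : (μ.cells.filter fun c => c.1 < k).card = rowPartial μ k := rfl
        omega
      have heqset := Finset.eq_of_subset_of_card_le hsub hcardim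
      have hmem : T q ∈ Finset.Icc 1 (rowPartial μ k) := by
        rw [heqset]
        exact Finset.mem_image.mpr ⟨q, Finset.mem_filter.mpr ⟨hq, hqk⟩, rfl⟩
      exact (Finset.mem_Icc.mp hmem).2
    have step2 : ∀ q ∈ μ.cells, rowPartial μ q.1 < T q := by
      intro q hq
      rcases Nat.eq_zero_or_pos q.1 with h0 | h1
      · rw [h0, rowPartial_zero]
        have := (hT.1.mapsTo (by exact_mod_cast hq)).1
        omega
      · by_contra hcon
        push_neg at hcon
        have hfa : ((insert μ.cells.card (DesY μ T)).filter
            (· < rowPartial μ q.1)).card ≤ q.1 - 1 := by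
          have := hfilt q.1
          rwa [heq q.1 h1] at this
        have := row_lt_of_le μ T hT q.1 (rowPartial μ q.1) h1 hfa q hq hcon
        omega
    obtain ⟨r, x⟩ := c
    have lower : ∀ y, (r, y) ∈ μ.cells → rowPartial μ r + y + 1 ≤ T (r, y) := by
      intro y
      induction y with
      | zero =>
        intro h
        have := step2 (r, 0) h
        simp only at this
        omega
      | succ y ih =>
        intro h
        have hy : (r, y) ∈ μ.cells := by
          rw [YoungDiagram.mem_cells] at h ⊢
          exact μ.up_left_mem le_rfl (by omega) h
        have h1 := hT.2.2.1 r y hy h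
        have h2 := ih hy
        omega
    have chain : ∀ j y, (r, y) ∈ μ.cells → (r, y + j) ∈ μ.cells →
        T (r, y) + j ≤ T (r, y + j) := by
      intro j
      induction j with
      | zero => intro y _ _; exact le_rfl
      | succ j ih =>
        intro y hy hyj
        have hmid : (r, y + j) ∈ μ.cells := by
          rw [YoungDiagram.mem_cells] at hyj ⊢
          exact μ.up_left_mem le_rfl (by omega) hyj
        have h1 := ih y hy hmid
        have h2 := hT.2.2.1 r (y + j) hmid (show (r, y + j + 1) ∈ μ.cells from hyj)
        show T (r, y) + (j + 1) ≤ T (r, y + j + 1)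
        omega
    have hxL : x < μ.rowLen r :=
      YoungDiagram.mem_iff_lt_rowLen.mp ((YoungDiagram.mem_cells _).mp hc)
    have hlast : (r, μ.rowLen r - 1) ∈ μ.cells := by
      rw [YoungDiagram.mem_cells, YoungDiagram.mem_iff_lt_rowLen]
      omega
    have hch := chain (μ.rowLen r - 1 - x) x hc
      (by rw [show x + (μ.rowLen r - 1 - x) = μ.rowLen r - 1 from by omega]; exact hlast)
    rw [show x + (μ.rowLen r - 1 - x) = μ.rowLen r - 1 from by omega] at hch
    have hstep1 := step1 (r + 1) (by omega) (r, μ.rowLen r - 1) hlast (by omega)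
    have hrs := rowPartial_succ μ r
    have hl := lower x hc
    simp only at hstep1 hl hch ⊢
    omega
  · -- superstandard implies equality of all partial sums
    intro hs k hk
    refine le_antisymm (part1 k hk) ?_
    have hcard : ((insert μ.cells.card (DesY μ T)).filter (· < rowPartial μ k)).card ≤ k - 1 := by
      have hsub : (insert μ.cells.card (DesY μ T)).filter (· < rowPartial μ k) ⊆
          (Finset.Icc 1 (k - 1)).image (rowPartial μ) := by
        intro z hz
        obtain ⟨hzs, hzlt⟩ := Finset.mem_filter.mp hz
        rcases Finset.mem_insert.mp hzs with rfl | hzd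
        · exact absurd hzlt (by have := rowPartial_le_card μ k; omega)
        · simp only [DesY, Finset.mem_filter, Finset.mem_Icc] at hzd
          obtain ⟨⟨hz1, hz2⟩, c1, hc1, c2, hc2, hT1, hT2, hlt⟩ := hzd
          have e1 := hs c1 hc1
          have e2 := hs c2 hc2
          have hb1 : c1.2 < μ.rowLen c1.1 := by
            rw [← YoungDiagram.mem_iff_lt_rowLen]
            rw [Prod.mk.eta]
            exact (YoungDiagram.mem_cells c1).mp hc1
          have hrs1 := rowPartial_succ μ c1.1
          have hm := rowPartial_mono μ (show c1.1 + 1 ≤ c2.1 from hlt)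
          have hzeq : z = rowPartial μ (c1.1 + 1) := by omega
          refine Finset.mem_image.mpr ⟨c1.1 + 1, Finset.mem_Icc.mpr ⟨by omega, ?_⟩, hzeq.symm⟩
          by_contra hcon
          push_neg at hcon
          have := rowPartial_mono μ (show k ≤ c1.1 + 1 from by omega)
          omega
      calc ((insert μ.cells.card (DesY μ T)).filter (· < rowPartial μ k)).card
          ≤ ((Finset.Icc 1 (k - 1)).image (rowPartial μ)).card := Finset.card_le_card hsub
        _ ≤ (Finset.Icc 1 (k - 1)).card := Finset.card_image_le
        _ = k - 1 := by rw [Nat.card_Icc]; omega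
    exact aux_le_getD _ _ _ _ (rowPartial_le_card μ k) hcard
end

section
/- The standard dual equivalence graphs are rigid: if φ : SYT(λ) → SYT(μ) is a bijection between standard Young tableaux of partition shapes λ and μ (both of size n) that preserves descent sets and intertwines all elementary dual equivalence involutions (φ(d_i(T)) = d_i(φ(T)) for all 1 < i < n), then λ = μ and φ is the identity map. -/
/-- The content of a cell. -/
def contentY (c : ℕ × ℕ) : ℤ := (c.2 : ℤ) - (c.1 : ℤ)

/-- The content reading order on cells: increasing content, and within a
diagonal, southwest to northeast (increasing column). -/
def rltY (x y : ℕ × ℕ) : Prop :=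
  contentY x < contentY y ∨ (contentY x = contentY y ∧ x.2 < y.2)

instance (x y : ℕ × ℕ) : Decidable (rltY x y) :=
  inferInstanceAs (Decidable (_ ∨ _ ∧ _))

/-- The cell of a standard tableau containing the value `v` (via choice). -/
noncomputable def cellOfY (T : ℕ × ℕ → ℕ) (v : ℕ) : ℕ × ℕ :=
  Classical.epsilon fun c => T c = v

/-- Haiman's elementary dual equivalence move `d_i` on standard Young tableaux,
acting through the content reading word: if `i` lies between `i-1` and `i+1`
in the reading word, do nothing; otherwise interchange `i` with whichever of
`i-1, i+1` lies further away in the reading word. -/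
noncomputable def dY (T : ℕ × ℕ → ℕ) (i : ℕ) : ℕ × ℕ → ℕ :=
  let a := i - 1
  let b := i
  let c := i + 1
  let xa := cellOfY T a
  let xb := cellOfY T b
  let xc := cellOfY T c
  if (rltY xa xb ∧ rltY xb xc) ∨ (rltY xc xb ∧ rltY xb xa) then T
  else
    let p := if rltY xb xa ∧ rltY xb xc then (if rltY xa xc then c else a)
             else (if rltY xa xc then a else c)
    fun x => if T x = b then p else if T x = p then b else T x

section Basic

variable {μ : YoungDiagram} {T : ℕ × ℕ → ℕ}

lemma std_zero (h : IsStandardYT μ T) {x : ℕ × ℕ} (hx : x ∉ μ.cells) : T x = 0 := h.2.1 x hx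

lemma std_val (h : IsStandardYT μ T) {x : ℕ × ℕ} (hx : x ∈ μ.cells) :
    1 ≤ T x ∧ T x ≤ μ.cells.card := h.1.mapsTo hx

lemma mem_of_val (h : IsStandardYT μ T) {x : ℕ × ℕ} {v : ℕ} (hv : 1 ≤ v) (hxv : T x = v) :
    x ∈ μ.cells := by
  by_contra hx
  rw [std_zero h hx] at hxv
  omega

lemma exists_cell (h : IsStandardYT μ T) {v : ℕ} (h1 : 1 ≤ v) (h2 : v ≤ μ.cells.card) :
    ∃ x ∈ μ.cells, T x = v := by
  obtain ⟨x, hx, hxv⟩ := h.1.surjOn (Set.mem_Icc.mpr ⟨h1, h2⟩)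
  exact ⟨x, hx, hxv⟩

lemma cellOfY_spec (h : IsStandardYT μ T) {v : ℕ} (h1 : 1 ≤ v) (h2 : v ≤ μ.cells.card) :
    T (cellOfY T v) = v := by
  obtain ⟨x, _, hxv⟩ := exists_cell h h1 h2
  exact Classical.epsilon_spec (⟨x, hxv⟩ : ∃ c, T c = v)

lemma cellOfY_mem (h : IsStandardYT μ T) {v : ℕ} (h1 : 1 ≤ v) (h2 : v ≤ μ.cells.card) :
    cellOfY T v ∈ μ.cells :=
  mem_of_val h h1 (cellOfY_spec h h1 h2)

lemma cellOfY_unique (h : IsStandardYT μ T) {v : ℕ} {x : ℕ × ℕ} (h1 : 1 ≤ v) (hx : T x = v) :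
    cellOfY T v = x := by
  have hxm : x ∈ μ.cells := mem_of_val h h1 hx
  have h2 : v ≤ μ.cells.card := by have := std_val h hxm; omega
  exact h.1.injOn (cellOfY_mem h h1 h2) hxm (by rw [cellOfY_spec h h1 h2, hx])

lemma std_row_lt (h : IsStandardYT μ T) {r c : ℕ} (h1 : (r, c) ∈ μ.cells)
    (h2 : (r, c + 1) ∈ μ.cells) : T (r, c) < T (r, c + 1) := h.2.2.1 r c h1 h2

lemma std_col_lt (h : IsStandardYT μ T) {r c : ℕ} (h1 : (r, c) ∈ μ.cells)
    (h2 : (r + 1, c) ∈ μ.cells) : T (r, c) < T (r + 1, c) := h.2.2.2 r c h1 h2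

lemma one_at_origin (h : IsStandardYT μ T) (hn : 1 ≤ μ.cells.card) : T (0, 0) = 1 := by
  obtain ⟨x, hx, hxv⟩ := exists_cell h le_rfl hn
  rcases x with ⟨r, c⟩
  rcases Nat.eq_zero_or_pos r with hr | hr
  · rcases Nat.eq_zero_or_pos c with hcz | hcz
    · rw [hr, hcz] at hxv; exact hxv
    · exfalso
      have hm : (r, c - 1) ∈ μ.cells := by
        rw [YoungDiagram.mem_cells] at hx ⊢
        exact μ.up_left_mem le_rfl (by omega) hx
      have hlt := std_row_lt h hm (by rwa [Nat.sub_add_cancel hcz])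
      rw [Nat.sub_add_cancel hcz, hxv] at hlt
      have := (std_val h hm).1
      omega
  · exfalso
    have hm : (r - 1, c) ∈ μ.cells := by
      rw [YoungDiagram.mem_cells] at hx ⊢
      exact μ.up_left_mem (by omega) le_rfl hx
    have hlt := std_col_lt h hm (by rwa [Nat.sub_add_cancel hr])
    rw [Nat.sub_add_cancel hr, hxv] at hlt
    have := (std_val h hm).1
    omega

end Basic
section Corner

variable {μ : YoungDiagram} {T : ℕ × ℕ → ℕ}

def IsCornerY (μ : YoungDiagram) (A : ℕ × ℕ) : Prop :=
  A ∈ μ.cells ∧ (A.1 + 1, A.2) ∉ μ.cells ∧ (A.1, A.2 + 1) ∉ μ.cells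

lemma not_le_of_corner {A x : ℕ × ℕ} (hA : IsCornerY μ A) (hx : x ∈ μ.cells) (hne : x ≠ A) :
    ¬ (A ≤ x) := by
  rintro ⟨h1, h2⟩
  rcases lt_or_eq_of_le h1 with h1' | h1'
  · exact hA.2.1 (μ.up_left_mem h1' h2 (by simpa using hx))
  · rcases lt_or_eq_of_le h2 with h2' | h2'
    · exact hA.2.2 (μ.up_left_mem h1'.le h2' (by simpa using hx))
    · exact hne (Prod.ext h1'.symm h2'.symm)

def eraseY (μ : YoungDiagram) (A : ℕ × ℕ) (h : IsCornerY μ A) : YoungDiagram :=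
  ⟨μ.cells.erase A, by
    intro x y hyx hx
    simp only [Finset.coe_erase, Set.mem_diff, Set.mem_singleton_iff, Finset.mem_coe] at hx ⊢
    obtain ⟨hxm, hxne⟩ := hx
    refine ⟨μ.isLowerSet hyx hxm, ?_⟩
    rintro rfl
    exact not_le_of_corner h hxm hxne hyx⟩

lemma mem_eraseY {A x : ℕ × ℕ} (h : IsCornerY μ A) :
    x ∈ (eraseY μ A h).cells ↔ x ≠ A ∧ x ∈ μ.cells := Finset.mem_erase

lemma eraseY_card {A : ℕ × ℕ} (h : IsCornerY μ A) :
    (eraseY μ A h).cells.card = μ.cells.card - 1 := Finset.card_erase_of_mem h.1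

lemma corner_eraseY {A B : ℕ × ℕ} (hA : IsCornerY μ A) (hB : IsCornerY μ B) (hne : B ≠ A) :
    IsCornerY (eraseY μ A hA) B := by
  refine ⟨(mem_eraseY hA).mpr ⟨hne, hB.1⟩, ?_, ?_⟩
  · intro hm; exact hB.2.1 ((mem_eraseY hA).mp hm).2
  · intro hm; exact hB.2.2 ((mem_eraseY hA).mp hm).2

lemma eraseY_comm {A B : ℕ × ℕ} (hA : IsCornerY μ A) (hB : IsCornerY μ B) (hne : B ≠ A) :
    eraseY (eraseY μ A hA) B (corner_eraseY hA hB hne) =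
      eraseY (eraseY μ B hB) A (corner_eraseY hB hA (Ne.symm hne)) := by
  apply YoungDiagram.ext
  simp [eraseY, Finset.erase_right_comm]

lemma corner_row_ne {A B : ℕ × ℕ} (hA : IsCornerY μ A) (hB : IsCornerY μ B) (hne : A ≠ B) :
    A.1 ≠ B.1 := by
  intro h
  rcases Nat.lt_trichotomy A.2 B.2 with h2 | h2 | h2
  · exact not_le_of_corner hA hB.1 (Ne.symm hne) ⟨h.le, h2.le⟩
  · exact hne (Prod.ext h h2)
  · exact not_le_of_corner hB hA.1 hne ⟨h.ge, h2.le⟩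

/-- Extend a tableau by placing value `v` in cell `A`. -/
def extY (T : ℕ × ℕ → ℕ) (A : ℕ × ℕ) (v : ℕ) : ℕ × ℕ → ℕ := fun x => if x = A then v else T x

/-- Remove the cell `A` from a tableau. -/
def resY (T : ℕ × ℕ → ℕ) (A : ℕ × ℕ) : ℕ × ℕ → ℕ := fun x => if x = A then 0 else T x

lemma extY_std {A : ℕ × ℕ} (hA : IsCornerY μ A) (hT : IsStandardYT (eraseY μ A hA) T) :
    IsStandardYT μ (extY T A μ.cells.card) := by
  have hn : 1 ≤ μ.cells.card := Finset.card_pos.mpr ⟨A, hA.1⟩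
  have hcard : (eraseY μ A hA).cells.card = μ.cells.card - 1 := eraseY_card hA
  set n := μ.cells.card with hndef
  have hval : ∀ x ∈ (eraseY μ A hA).cells, 1 ≤ T x ∧ T x ≤ n - 1 := by
    intro x hx; have := std_val hT hx; omega
  have hext_mem : ∀ x ∈ μ.cells, x ≠ A → x ∈ (eraseY μ A hA).cells := by
    intro x hx hne; exact (mem_eraseY hA).mpr ⟨hne, hx⟩
  refine ⟨⟨?_, ?_, ?_⟩, ?_, ?_, ?_⟩
  · -- MapsTo
    intro x hx
    by_cases hxa : x = A
    · simp only [extY, if_pos hxa]; exact Set.mem_Icc.mpr ⟨hn, le_rfl⟩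
    · simp only [extY, if_neg hxa]
      have := hval x (hext_mem x hx hxa)
      exact Set.mem_Icc.mpr ⟨this.1, by omega⟩
  · -- InjOn
    intro x hx y hy hxy
    by_cases hxa : x = A <;> by_cases hya : y = A
    · rw [hxa, hya]
    · exfalso; simp only [extY, if_pos hxa, if_neg hya] at hxy
      have := hval y (hext_mem y hy hya); omega
    · exfalso; simp only [extY, if_neg hxa, if_pos hya] at hxy
      have := hval x (hext_mem x hx hxa); omega
    · simp only [extY, if_neg hxa, if_neg hya] at hxy
      exact hT.1.injOn (hext_mem x hx hxa) (hext_mem y hy hya) hxy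
  · -- SurjOn
    intro v hv
    rw [Set.mem_Icc] at hv
    by_cases hvn : v = n
    · exact ⟨A, hA.1, by simp [extY, hvn]⟩
    · obtain ⟨x, hx, hxv⟩ := exists_cell hT hv.1 (by omega)
      have hxa : x ≠ A := ((mem_eraseY hA).mp hx).1
      exact ⟨x, ((mem_eraseY hA).mp hx).2, by simp [extY, if_neg hxa, hxv]⟩
  · -- zero outside
    intro c hc
    have hca : c ≠ A := fun h => hc (h ▸ hA.1)
    have : c ∉ (eraseY μ A hA).cells := fun h => hc ((mem_eraseY hA).mp h).2
    simp [extY, if_neg hca, std_zero hT this]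
  · -- rows
    intro r c h1 h2
    have h1a : (r, c) ≠ A := by
      rintro rfl; exact hA.2.2 h2
    by_cases h2a : (r, c + 1) = A
    · simp only [extY, if_neg h1a, if_pos h2a]
      have := hval _ (hext_mem _ h1 h1a); omega
    · simp only [extY, if_neg h1a, if_neg h2a]
      exact std_row_lt hT (hext_mem _ h1 h1a) (hext_mem _ h2 h2a)
  · -- cols
    intro r c h1 h2
    have h1a : (r, c) ≠ A := by
      rintro rfl; exact hA.2.1 h2
    by_cases h2a : (r + 1, c) = A
    · simp only [extY, if_neg h1a, if_pos h2a]
      have := hval _ (hext_mem _ h1 h1a); omega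
    · simp only [extY, if_neg h1a, if_neg h2a]
      exact std_col_lt hT (hext_mem _ h1 h1a) (hext_mem _ h2 h2a)

lemma top_corner (h : IsStandardYT μ T) (hn : 1 ≤ μ.cells.card) :
    IsCornerY μ (cellOfY T μ.cells.card) := by
  set A := cellOfY T μ.cells.card with hA
  have hAm : A ∈ μ.cells := cellOfY_mem h hn le_rfl
  have hAv : T A = μ.cells.card := cellOfY_spec h hn le_rfl
  have hAm' : (A.1, A.2) ∈ μ.cells := by rwa [Prod.mk.eta]
  refine ⟨hAm, ?_, ?_⟩
  · intro hm
    have h1 := std_col_lt h hAm' hm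
    rw [Prod.mk.eta, hAv] at h1
    have := (std_val h hm).2
    omega
  · intro hm
    have h1 := std_row_lt h hAm' hm
    rw [Prod.mk.eta, hAv] at h1
    have := (std_val h hm).2
    omega

lemma resY_std (h : IsStandardYT μ T) (hn : 1 ≤ μ.cells.card) :
    IsStandardYT (eraseY μ (cellOfY T μ.cells.card) (top_corner h hn))
      (resY T (cellOfY T μ.cells.card)) := by
  set n := μ.cells.card with hndef
  set A := cellOfY T n with hA
  have hAv : T A = n := cellOfY_spec h hn le_rfl
  have hc := top_corner h hn
  have hcard : (eraseY μ A hc).cells.card = n - 1 := eraseY_card hc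
  have hval : ∀ x ∈ (eraseY μ A hc).cells, 1 ≤ T x ∧ T x ≤ n - 1 := by
    intro x hx
    obtain ⟨hxa, hxm⟩ := (mem_eraseY hc).mp hx
    have h1 := std_val h hxm
    have : T x ≠ n := fun hv => hxa (h.1.injOn hxm hc.1 (by rw [hv, hAv]))
    omega
  have hres : ∀ x ∈ (eraseY μ A hc).cells, resY T A x = T x := by
    intro x hx
    exact if_neg ((mem_eraseY hc).mp hx).1
  refine ⟨⟨?_, ?_, ?_⟩, ?_, ?_, ?_⟩
  · intro x hx
    rw [hres x hx, hcard]
    exact Set.mem_Icc.mpr (hval x hx)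
  · intro x hx y hy hxy
    rw [hres x hx, hres y hy] at hxy
    exact h.1.injOn ((mem_eraseY hc).mp hx).2 ((mem_eraseY hc).mp hy).2 hxy
  · intro v hv
    rw [Set.mem_Icc, hcard] at hv
    obtain ⟨x, hx, hxv⟩ := exists_cell h hv.1 (by omega)
    have hxa : x ≠ A := by
      rintro rfl; omega
    refine ⟨x, (mem_eraseY hc).mpr ⟨hxa, hx⟩, ?_⟩
    rw [hres x ((mem_eraseY hc).mpr ⟨hxa, hx⟩), hxv]
  · intro c hcm
    by_cases hca : c = A
    · show resY T A c = 0; simp [resY, hca]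
    · have : c ∉ μ.cells := fun hm => hcm ((mem_eraseY hc).mpr ⟨hca, hm⟩)
      simp [resY, if_neg hca, std_zero h this]
  · intro r c h1 h2
    rw [hres _ h1, hres _ h2]
    exact std_row_lt h ((mem_eraseY hc).mp h1).2 ((mem_eraseY hc).mp h2).2
  · intro r c h1 h2
    rw [hres _ h1, hres _ h2]
    exact std_col_lt h ((mem_eraseY hc).mp h1).2 ((mem_eraseY hc).mp h2).2

lemma extY_resY (h : IsStandardYT μ T) (hn : 1 ≤ μ.cells.card) :
    extY (resY T (cellOfY T μ.cells.card)) (cellOfY T μ.cells.card) μ.cells.card = T := by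
  funext x
  by_cases hx : x = cellOfY T μ.cells.card
  · rw [hx]
    simp only [extY, if_pos rfl]
    exact (cellOfY_spec h hn le_rfl).symm
  · simp [extY, resY, if_neg hx]

end Corner
section Superstandard

variable {μ : YoungDiagram} {T : ℕ × ℕ → ℕ}

/-- Partial sums of row lengths. -/
def psumY (μ : YoungDiagram) (r : ℕ) : ℕ := ∑ j ∈ Finset.range r, μ.rowLen j

lemma psumY_succ (μ : YoungDiagram) (r : ℕ) : psumY μ (r + 1) = psumY μ r + μ.rowLen r :=
  Finset.sum_range_succ _ _

lemma psumY_mono (μ : YoungDiagram) : Monotone (psumY μ) := by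
  intro a b hab
  exact Finset.sum_le_sum_of_subset (Finset.range_subset_range.mpr hab)

lemma lt_of_psumY_lt {μ : YoungDiagram} {r s : ℕ} (h : psumY μ r < psumY μ s) : r < s := by
  by_contra hc
  exact absurd (psumY_mono μ (not_lt.mp hc)) (not_le.mpr h)

lemma mem_cells_iff_lt_rowLen {μ : YoungDiagram} {r c : ℕ} :
    (r, c) ∈ μ.cells ↔ c < μ.rowLen r := by
  rw [YoungDiagram.mem_cells]; exact YoungDiagram.mem_iff_lt_rowLen

lemma cells_row_bound {μ : YoungDiagram} {x : ℕ × ℕ} (hx : x ∈ μ.cells) :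
    x.1 < μ.cells.card := by
  have hsub : (Finset.range (x.1 + 1)).image (fun r => (r, x.2)) ⊆ μ.cells := by
    intro y hy
    simp only [Finset.mem_image, Finset.mem_range] at hy
    obtain ⟨r, hr, rfl⟩ := hy
    rw [YoungDiagram.mem_cells]
    have hm : (x.1, x.2) ∈ μ := by simpa using hx
    refine μ.up_left_mem ?_ le_rfl hm
    omega
  have := Finset.card_le_card hsub
  rwa [Finset.card_image_of_injective _ (fun a b h => (Prod.mk.injEq _ _ _ _).mp h |>.1),
    Finset.card_range] at this

lemma card_filter_row_lt (μ : YoungDiagram) (j : ℕ) :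
    (μ.cells.filter (fun c => c.1 < j)).card = psumY μ j := by
  induction j with
  | zero => simp [psumY]
  | succ j ih =>
      have hsplit : μ.cells.filter (fun c => c.1 < j + 1) =
          (μ.cells.filter (fun c => c.1 < j)) ∪ μ.row j := by
        ext c
        simp only [Finset.mem_filter, Finset.mem_union, YoungDiagram.mem_row_iff,
          YoungDiagram.mem_cells]
        constructor
        · rintro ⟨hm, hlt⟩
          rcases Nat.lt_or_ge c.1 j with h | h
          · exact Or.inl ⟨hm, h⟩
          · exact Or.inr ⟨hm, by omega⟩
        · rintro (⟨hm, h⟩ | ⟨hm, h⟩) <;> exact ⟨hm, by omega⟩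
      have hdisj : Disjoint (μ.cells.filter (fun c => c.1 < j)) (μ.row j) := by
        rw [Finset.disjoint_left]
        intro c hc hc'
        rw [Finset.mem_filter] at hc
        rw [YoungDiagram.mem_row_iff] at hc'
        omega
      rw [hsplit, Finset.card_union_of_disjoint hdisj, ih, psumY_succ,
        ← YoungDiagram.rowLen_eq_card]

lemma psumY_card (μ : YoungDiagram) {j : ℕ} (hj : μ.cells.card ≤ j) :
    psumY μ j = μ.cells.card := by
  rw [← card_filter_row_lt]
  congr 1
  apply Finset.filter_true_of_mem
  intro x hx
  exact lt_of_lt_of_le (cells_row_bound hx) hj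

lemma psumY_le_card (μ : YoungDiagram) (j : ℕ) : psumY μ j ≤ μ.cells.card := by
  rw [← card_filter_row_lt]
  exact Finset.card_le_card (Finset.filter_subset _ _)

/-- The superstandard tableau of shape `μ`: rows filled consecutively. -/
def UY (μ : YoungDiagram) : ℕ × ℕ → ℕ :=
  fun x => if x ∈ μ.cells then psumY μ x.1 + x.2 + 1 else 0

lemma UY_apply {r c : ℕ} (h : (r, c) ∈ μ.cells) : UY μ (r, c) = psumY μ r + c + 1 := by
  simp [UY, h]

lemma UY_le {r c : ℕ} (h : (r, c) ∈ μ.cells) : UY μ (r, c) ≤ psumY μ (r + 1) := by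
  rw [UY_apply h, psumY_succ]
  have := mem_cells_iff_lt_rowLen.mp h
  omega

lemma exists_psumY_row (μ : YoungDiagram) (j : ℕ) :
    ∀ v, 1 ≤ v → v ≤ psumY μ j → ∃ r, r < j ∧ psumY μ r < v ∧ v ≤ psumY μ (r + 1) := by
  induction j with
  | zero => intro v h1 h2; simp [psumY] at h2; omega
  | succ j ih =>
      intro v h1 h2
      by_cases hv : v ≤ psumY μ j
      · obtain ⟨r, hr, h⟩ := ih v h1 hv
        exact ⟨r, by omega, h⟩
      · exact ⟨j, by omega, by omega, h2⟩

lemma UY_std (μ : YoungDiagram) : IsStandardYT μ (UY μ) := by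
  refine ⟨⟨?_, ?_, ?_⟩, ?_, ?_, ?_⟩
  · intro x hx
    obtain ⟨r, c⟩ := x
    have h1 := UY_apply hx
    have h2 := UY_le hx
    have h3 := psumY_le_card μ (r + 1)
    rw [Set.mem_Icc, h1]
    constructor
    · omega
    · rw [← h1]; omega
  · intro x hx y hy hxy
    obtain ⟨r, c⟩ := x
    obtain ⟨r', c'⟩ := y
    rw [UY_apply hx, UY_apply hy] at hxy
    rcases Nat.lt_trichotomy r r' with h | h | h
    · exfalso
      have h2 : psumY μ r + c + 1 ≤ psumY μ (r + 1) := by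
        rw [← UY_apply hx]; exact UY_le hx
      have h3 := psumY_mono μ (show r + 1 ≤ r' by omega)
      omega
    · rw [h] at hxy ⊢
      have : c = c' := by omega
      rw [this]
    · exfalso
      have h2 : psumY μ r' + c' + 1 ≤ psumY μ (r' + 1) := by
        rw [← UY_apply hy]; exact UY_le hy
      have h3 := psumY_mono μ (show r' + 1 ≤ r by omega)
      omega
  · intro v hv
    rw [Set.mem_Icc] at hv
    have hcard : psumY μ μ.cells.card = μ.cells.card := psumY_card μ le_rfl
    obtain ⟨r, _, h1, h2⟩ := exists_psumY_row μ μ.cells.card v hv.1 (by omega)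
    have hmem : (r, v - psumY μ r - 1) ∈ μ.cells := by
      rw [mem_cells_iff_lt_rowLen]
      have := psumY_succ μ r
      omega
    refine ⟨(r, v - psumY μ r - 1), hmem, ?_⟩
    rw [UY_apply hmem]
    omega
  · intro c hc; simp [UY, hc]
  · intro r c h1 h2
    rw [UY_apply h1, UY_apply h2]
    omega
  · intro r c h1 h2
    rw [UY_apply h1, UY_apply h2]
    have := UY_le h1
    have := UY_apply h1
    omega

lemma des_UY {i : ℕ} (hi : i ∈ DesY μ (UY μ)) : ∃ s, 1 ≤ s ∧ psumY μ s = i := by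
  rw [DesY, Finset.mem_filter] at hi
  obtain ⟨-, c1, hc1, c2, hc2, hv1, hv2, hrow⟩ := hi
  obtain ⟨r, c⟩ := c1
  obtain ⟨r', c'⟩ := c2
  rw [UY_apply hc1] at hv1
  rw [UY_apply hc2] at hv2
  simp only at hrow
  have h1 : psumY μ r + c + 1 ≤ psumY μ (r + 1) := by
    have := mem_cells_iff_lt_rowLen.mp hc1
    rw [psumY_succ]; omega
  have h2 := psumY_mono μ (show r + 1 ≤ r' by omega)
  refine ⟨r', by omega, by omega⟩

end Superstandard
section Descents

variable {μ : YoungDiagram} {T : ℕ × ℕ → ℕ}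

lemma mem_DesY (h : IsStandardYT μ T) {w : ℕ} (h1 : 1 ≤ w) (h2 : w + 1 ≤ μ.cells.card)
    (hrow : (cellOfY T w).1 < (cellOfY T (w + 1)).1) : w ∈ DesY μ T := by
  rw [DesY, Finset.mem_filter]
  refine ⟨Finset.mem_Icc.mpr ⟨h1, by omega⟩, cellOfY T w, cellOfY_mem h h1 (by omega),
    cellOfY T (w + 1), cellOfY_mem h (by omega) h2, cellOfY_spec h h1 (by omega),
    cellOfY_spec h (by omega) h2, hrow⟩

lemma descent_exists (h : IsStandardYT μ T) {u v : ℕ} (hu : 1 ≤ u) (huv : u + 1 ≤ v)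
    (hv : v ≤ μ.cells.card) (hrow : (cellOfY T u).1 < (cellOfY T v).1) :
    ∃ w, u ≤ w ∧ w < v ∧ w ∈ DesY μ T := by
  induction v, huv using Nat.le_induction with
  | base => exact ⟨u, le_rfl, by omega, mem_DesY h hu hv hrow⟩
  | succ v hv' ih =>
      by_cases hd : (cellOfY T v).1 < (cellOfY T (v + 1)).1
      · exact ⟨v, by omega, by omega, mem_DesY h (by omega) hv hd⟩
      · obtain ⟨w, hw1, hw2, hw3⟩ := ih (by omega) (by omega)
        exact ⟨w, hw1, by omega, hw3⟩

lemma row_le_des_card (h : IsStandardYT μ T) :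
    ∀ v, 1 ≤ v → v ≤ μ.cells.card →
      (cellOfY T v).1 ≤ ((DesY μ T) ∩ Finset.Icc 1 (v - 1)).card := by
  intro v
  induction v using Nat.strong_induction_on with
  | _ v ih =>
      intro h1 h2
      set x := cellOfY T v with hx
      rcases Nat.eq_zero_or_pos x.1 with hr | hr
      · omega
      · have hxm : x ∈ μ.cells := cellOfY_mem h h1 h2
        have hxv : T x = v := cellOfY_spec h h1 h2
        have hup : (x.1 - 1, x.2) ∈ μ.cells := by
          rw [YoungDiagram.mem_cells]
          refine μ.up_left_mem ?_ le_rfl (show (x.1, x.2) ∈ μ by simpa using hxm)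
          omega
        set u := T (x.1 - 1, x.2) with hu
        have huv : u < v := by
          have hlt := std_col_lt h hup (show (x.1 - 1 + 1, x.2) ∈ μ.cells by
            rw [Nat.sub_add_cancel hr]; simpa using hxm)
          rw [Nat.sub_add_cancel hr, Prod.mk.eta, hxv] at hlt
          exact hlt
        have hu1 : 1 ≤ u := (std_val h hup).1
        have hu2 : u ≤ μ.cells.card := (std_val h hup).2
        have hcu : cellOfY T u = (x.1 - 1, x.2) := cellOfY_unique h hu1 rfl
        have hih := ih u huv hu1 hu2
        rw [hcu] at hih
        obtain ⟨w, hw1, hw2, hw3⟩ := descent_exists h hu1 (by omega) h2 (by rw [hcu, ← hx]; show x.1 - 1 < x.1; omega)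
        have hsub : insert w ((DesY μ T) ∩ Finset.Icc 1 (u - 1)) ⊆
            (DesY μ T) ∩ Finset.Icc 1 (v - 1) := by
          intro y hy
          rcases Finset.mem_insert.mp hy with rfl | hy'
          · exact Finset.mem_inter.mpr ⟨hw3, Finset.mem_Icc.mpr ⟨by omega, by omega⟩⟩
          · rw [Finset.mem_inter, Finset.mem_Icc] at hy' ⊢
            exact ⟨hy'.1, hy'.2.1, by omega⟩
        have hnm : w ∉ (DesY μ T) ∩ Finset.Icc 1 (u - 1) := by
          rw [Finset.mem_inter, Finset.mem_Icc]
          omega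
        have := Finset.card_le_card hsub
        rw [Finset.card_insert_of_notMem hnm] at this
        omega

/-- Key dominance bound: if `T` is standard of shape `lam` with the same descent
set as the superstandard tableau of `mu`, then values `≤ psumY mu j` sit in the
first `j` rows. -/
lemma row_lt_of_le_psum {lam mu : YoungDiagram} (hT : IsStandardYT lam T)
    (hdes : DesY lam T = DesY mu (UY mu)) {j v : ℕ} (h1 : 1 ≤ v) (h2 : v ≤ psumY mu j)
    (h3 : v ≤ lam.cells.card) : (cellOfY T v).1 < j := by
  rcases Nat.eq_zero_or_pos j with rfl | hj
  · simp [psumY] at h2; omega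
  have hsub : (DesY lam T) ∩ Finset.Icc 1 (v - 1) ⊆
      (Finset.Icc 1 (j - 1)).image (psumY mu) := by
    intro i hi
    rw [Finset.mem_inter, Finset.mem_Icc] at hi
    obtain ⟨hi1, hi2, hi3⟩ := hi
    rw [hdes] at hi1
    obtain ⟨s, hs1, hs2⟩ := des_UY hi1
    have hlt : psumY mu s < psumY mu j := by omega
    have := lt_of_psumY_lt hlt
    exact Finset.mem_image.mpr ⟨s, Finset.mem_Icc.mpr ⟨hs1, by omega⟩, hs2⟩
  have hcard := Finset.card_le_card hsub
  have him := Finset.card_image_le (s := Finset.Icc 1 (j - 1)) (f := psumY mu)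
  rw [Nat.card_Icc] at him
  have := row_le_des_card hT v h1 h3
  omega

lemma psum_le_psum {lam mu : YoungDiagram} (hT : IsStandardYT lam T)
    (hdes : DesY lam T = DesY mu (UY mu)) (hcard : mu.cells.card ≤ lam.cells.card) :
    ∀ j, psumY mu j ≤ psumY lam j := by
  intro j
  have hinj : Set.InjOn (cellOfY T) (Finset.Icc 1 (psumY mu j)) := by
    intro a ha b hb hab
    simp only [Finset.coe_Icc, Set.mem_Icc] at ha hb
    have hpl := psumY_le_card mu j
    have ha' := cellOfY_spec hT ha.1 (by omega)
    have hb' := cellOfY_spec hT hb.1 (by omega)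
    rw [hab] at ha'
    omega
  have hmap : ∀ v ∈ Finset.Icc 1 (psumY mu j),
      cellOfY T v ∈ lam.cells.filter (fun c => c.1 < j) := by
    intro v hv
    rw [Finset.mem_Icc] at hv
    have hpl := psumY_le_card mu j
    rw [Finset.mem_filter]
    exact ⟨cellOfY_mem hT hv.1 (by omega),
      row_lt_of_le_psum hT hdes hv.1 hv.2 (by omega)⟩
  have := Finset.card_le_card_of_injOn _ hmap hinj
  rwa [Nat.card_Icc, card_filter_row_lt, Nat.add_sub_cancel] at this

end Descents
section EqualityCase

variable {mu : YoungDiagram} {T : ℕ × ℕ → ℕ}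

lemma eq_UY (hT : IsStandardYT mu T) (hdes : DesY mu T = DesY mu (UY mu)) : T = UY mu := by
  set n := mu.cells.card with hn
  have hAB : ∀ j, (Finset.Icc 1 n).filter (fun v => (cellOfY T v).1 < j) =
      Finset.Icc 1 (psumY mu j) := by
    intro j
    have hBA : Finset.Icc 1 (psumY mu j) ⊆
        (Finset.Icc 1 n).filter (fun v => (cellOfY T v).1 < j) := by
      intro v hv
      rw [Finset.mem_Icc] at hv
      have hpl := psumY_le_card mu j
      rw [Finset.mem_filter, Finset.mem_Icc]
      exact ⟨⟨hv.1, by omega⟩, row_lt_of_le_psum hT hdes hv.1 hv.2 (by omega)⟩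
    have hcard : ((Finset.Icc 1 n).filter (fun v => (cellOfY T v).1 < j)).card ≤
        psumY mu j := by
      have hinj : Set.InjOn (cellOfY T)
          ((Finset.Icc 1 n).filter (fun v => (cellOfY T v).1 < j)) := by
        intro a ha b hb hab
        simp only [Finset.coe_filter, Set.mem_setOf_eq, Finset.mem_Icc] at ha hb
        have ha' := cellOfY_spec hT ha.1.1 ha.1.2
        have hb' := cellOfY_spec hT hb.1.1 hb.1.2
        rw [hab] at ha'
        omega
      have hmap : ∀ v ∈ (Finset.Icc 1 n).filter (fun v => (cellOfY T v).1 < j),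
          cellOfY T v ∈ mu.cells.filter (fun c => c.1 < j) := by
        intro v hv
        rw [Finset.mem_filter, Finset.mem_Icc] at hv
        exact Finset.mem_filter.mpr ⟨cellOfY_mem hT hv.1.1 hv.1.2, hv.2⟩
      have := Finset.card_le_card_of_injOn _ hmap hinj
      rwa [card_filter_row_lt] at this
    have := Finset.eq_of_subset_of_card_le hBA (by rw [Nat.card_Icc, Nat.add_sub_cancel]; exact hcard)
    exact this.symm
  have key : ∀ r c, (r, c) ∈ mu.cells → psumY mu r < T (r, c) ∧ T (r, c) ≤ psumY mu (r + 1) := by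
    intro r c hm
    have hv := std_val hT hm
    have hcell : cellOfY T (T (r, c)) = (r, c) := cellOfY_unique hT hv.1 rfl
    constructor
    · by_contra hle
      have : T (r, c) ∈ Finset.Icc 1 (psumY mu r) := Finset.mem_Icc.mpr ⟨hv.1, by omega⟩
      rw [← hAB r, Finset.mem_filter, hcell] at this
      omega
    · have : T (r, c) ∈ (Finset.Icc 1 n).filter (fun v => (cellOfY T v).1 < r + 1) := by
        rw [Finset.mem_filter, Finset.mem_Icc, hcell]
        exact ⟨⟨hv.1, hv.2⟩, by omega⟩
      rw [hAB (r + 1), Finset.mem_Icc] at this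
      exact this.2
  have low : ∀ c r, (r, c) ∈ mu.cells → psumY mu r + c + 1 ≤ T (r, c) := by
    intro c
    induction c with
    | zero => intro r hm; have := (key r 0 hm).1; omega
    | succ c ih =>
        intro r hm
        have hm' : (r, c) ∈ mu.cells := by
          rw [YoungDiagram.mem_cells] at hm ⊢
          exact mu.up_left_mem le_rfl (by omega) hm
        have := ih r hm'
        have := std_row_lt hT hm' hm
        omega
  have high : ∀ k c r, (r, c) ∈ mu.cells → c + k + 1 = mu.rowLen r →
      T (r, c) ≤ psumY mu r + c + 1 := by
    intro k
    induction k with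
    | zero =>
        intro c r hm hlen
        have := (key r c hm).2
        rw [psumY_succ] at this
        omega
    | succ k ih =>
        intro c r hm hlen
        have hm' : (r, c + 1) ∈ mu.cells := by
          rw [mem_cells_iff_lt_rowLen]; omega
        have := ih (c + 1) r hm' (by omega)
        have := std_row_lt hT hm hm'
        omega
  funext x
  by_cases hx : x ∈ mu.cells
  · obtain ⟨r, c⟩ := x
    have hlen := mem_cells_iff_lt_rowLen.mp hx
    have h1 := low c r hx
    have h2 := high (mu.rowLen r - c - 1) c r hx (by omega)
    rw [UY_apply hx]
    omega
  · rw [std_zero hT hx, std_zero (UY_std mu) hx]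

/-- Shapes with equal partial row sums are equal. -/
lemma shape_eq_of_psum {lam mu : YoungDiagram} (h : ∀ j, psumY lam j = psumY mu j) :
    lam = mu := by
  have hrow : ∀ r, lam.rowLen r = mu.rowLen r := by
    intro r
    have h1 := psumY_succ lam r
    have h2 := psumY_succ mu r
    have := h r
    have := h (r + 1)
    omega
  apply YoungDiagram.ext
  ext x
  obtain ⟨r, c⟩ := x
  rw [mem_cells_iff_lt_rowLen, mem_cells_iff_lt_rowLen, hrow r]

end EqualityCase
section Reading

lemma rltY_asymm {x y : ℕ × ℕ} (h : rltY x y) : ¬ rltY y x := by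
  rcases h with h | ⟨h1, h2⟩ <;> rintro (h' | ⟨h1', h2'⟩) <;> omega

lemma rltY_trans {x y z : ℕ × ℕ} (h1 : rltY x y) (h2 : rltY y z) : rltY x z := by
  rcases h1 with h1 | ⟨h1a, h1b⟩ <;> rcases h2 with h2 | ⟨h2a, h2b⟩
  · exact Or.inl (lt_trans h1 h2)
  · exact Or.inl (h2a ▸ h1)
  · exact Or.inl (h1a ▸ h2)
  · exact Or.inr ⟨h1a.trans h2a, lt_trans h1b h2b⟩

end Reading

section Reach

/-- Reachability by elementary dual equivalence moves through standard tableaux. -/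
inductive ReachY (lam : YoungDiagram) : (ℕ × ℕ → ℕ) → (ℕ × ℕ → ℕ) → Prop
  | refl (T) : ReachY lam T T
  | step {T T'} (h : ReachY lam T T') (hstd : IsStandardYT lam T') (i : ℕ)
      (h1 : 1 < i) (h2 : i < lam.cells.card) : ReachY lam T (dY T' i)

lemma ReachY.trans {lam : YoungDiagram} {T1 T2 T3 : ℕ × ℕ → ℕ}
    (h12 : ReachY lam T1 T2) (h23 : ReachY lam T2 T3) : ReachY lam T1 T3 := by
  induction h23 with
  | refl => exact h12
  | step h hstd i hi1 hi2 ih => exact ih.step hstd i hi1 hi2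

variable {μ : YoungDiagram} {T : ℕ × ℕ → ℕ} {A : ℕ × ℕ}

lemma cellOfY_extY (hA : IsCornerY μ A) (hT : IsStandardYT (eraseY μ A hA) T) {v : ℕ}
    (h1 : 1 ≤ v) (h2 : v ≤ μ.cells.card - 1) :
    cellOfY (extY T A μ.cells.card) v = cellOfY T v := by
  have hn : 1 ≤ μ.cells.card := Finset.card_pos.mpr ⟨A, hA.1⟩
  have hTA : T A = 0 := std_zero hT (fun hm => ((mem_eraseY hA).mp hm).1 rfl)
  unfold cellOfY
  congr 1
  funext c
  by_cases hc : c = A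
  · rw [hc]
    have hev : extY T A μ.cells.card A = μ.cells.card := by simp [extY]
    rw [hev, hTA]
    apply propext
    constructor <;> intro h <;> omega
  · simp only [extY, if_neg hc]

lemma dY_extY (hA : IsCornerY μ A) (hT : IsStandardYT (eraseY μ A hA) T) {i : ℕ}
    (h1 : 1 < i) (h2 : i + 1 ≤ μ.cells.card - 1) :
    dY (extY T A μ.cells.card) i = extY (dY T i) A μ.cells.card := by
  have hn : 1 ≤ μ.cells.card := Finset.card_pos.mpr ⟨A, hA.1⟩
  have hTA : T A = 0 := std_zero hT (fun hm => ((mem_eraseY hA).mp hm).1 rfl)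
  have ha := cellOfY_extY hA hT (v := i - 1) (by omega) (by omega)
  have hb := cellOfY_extY hA hT (v := i) (by omega) (by omega)
  have hc := cellOfY_extY hA hT (v := i + 1) (by omega) h2
  simp only [dY]
  rw [ha, hb, hc]
  by_cases hfix : (rltY (cellOfY T (i - 1)) (cellOfY T i) ∧
      rltY (cellOfY T i) (cellOfY T (i + 1))) ∨
      (rltY (cellOfY T (i + 1)) (cellOfY T i) ∧ rltY (cellOfY T i) (cellOfY T (i - 1)))
  · rw [if_pos hfix, if_pos hfix]
  · rw [if_neg hfix, if_neg hfix]
    set p := if rltY (cellOfY T i) (cellOfY T (i - 1)) ∧ rltY (cellOfY T i) (cellOfY T (i + 1))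
      then (if rltY (cellOfY T (i - 1)) (cellOfY T (i + 1)) then i + 1 else i - 1)
      else (if rltY (cellOfY T (i - 1)) (cellOfY T (i + 1)) then i - 1 else i + 1) with hp
    have hpb : 1 ≤ p ∧ p ≤ μ.cells.card - 1 := by
      rw [hp]
      split_ifs <;> omega
    funext x
    by_cases hx : x = A
    · rw [hx]
      simp only [extY, if_pos rfl, hTA]
      have hnb : ¬ (μ.cells.card = i) := by omega
      have hnp : ¬ (μ.cells.card = p) := by omega
      simp only [if_true]
      rw [if_neg hnb, if_neg hnp]
    · simp only [extY, if_neg hx]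

lemma ReachY.lift (hA : IsCornerY μ A) {T1 T2 : ℕ × ℕ → ℕ}
    (h : ReachY (eraseY μ A hA) T1 T2) :
    ReachY μ (extY T1 A μ.cells.card) (extY T2 A μ.cells.card) := by
  induction h with
  | refl => exact ReachY.refl _
  | step h hstd i hi1 hi2 ih =>
      have hcard : (eraseY μ A hA).cells.card = μ.cells.card - 1 := eraseY_card hA
      rw [hcard] at hi2
      rw [← dY_extY hA hstd hi1 (by omega)]
      exact ih.step (extY_std hA hstd) i hi1 (by omega)

end Reach
section Between

variable {μ : YoungDiagram} {P Q : ℕ × ℕ}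

lemma rowLen_of_corner (hP : IsCornerY μ P) : μ.rowLen P.1 = P.2 + 1 := by
  have h1 : P.2 < μ.rowLen P.1 := by
    rw [← mem_cells_iff_lt_rowLen]
    simpa [Prod.mk.eta] using hP.1
  have h2 : ¬ (P.2 + 1 < μ.rowLen P.1) := by
    rw [← mem_cells_iff_lt_rowLen]
    exact hP.2.2
  omega

lemma between_corner (hP : IsCornerY μ P) (hQ : IsCornerY μ Q) (hPQ : Q.1 < P.1)
    (hne : Q ≠ P) :
    ∃ C, IsCornerY (eraseY (eraseY μ P hP) Q (corner_eraseY hP hQ hne)) C ∧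
      rltY P C ∧ rltY C Q := by
  set ν := eraseY (eraseY μ P hP) Q (corner_eraseY hP hQ hne) with hν
  have memν : ∀ x : ℕ × ℕ, x ∈ ν.cells ↔ x ≠ Q ∧ x ≠ P ∧ x ∈ μ.cells := by
    intro x
    rw [hν, mem_eraseY, mem_eraseY]
  have hP1 : 1 ≤ P.1 := by omega
  set L := ν.rowLen (P.1 - 1) with hL
  have hPm : (P.1 - 1, P.2) ∈ ν.cells := by
    rw [memν]
    refine ⟨?_, ?_, ?_⟩
    · intro h
      have h1 := congrArg Prod.fst h
      have h2 := congrArg Prod.snd h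
      dsimp only at h1 h2
      apply hQ.2.1
      have hx : (Q.1 + 1, Q.2) = (P.1, P.2) := by
        rw [← h1, ← h2, Nat.sub_add_cancel hP1]
      rw [hx, Prod.mk.eta]
      exact hP.1
    · intro h
      have h1 := congrArg Prod.fst h
      dsimp only at h1
      omega
    · rw [YoungDiagram.mem_cells]
      have hm : (P.1, P.2) ∈ μ := by rw [Prod.mk.eta]; exact hP.1
      refine μ.up_left_mem ?_ le_rfl hm
      omega
  have hPL : P.2 < L := by rw [hL, ← mem_cells_iff_lt_rowLen]; exact hPm
  have hL1 : 1 ≤ L := by omega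
  set C : ℕ × ℕ := (P.1 - 1, L - 1) with hC
  have hCm : C ∈ ν.cells := by
    rw [hC, mem_cells_iff_lt_rowLen, ← hL]
    omega
  have hCμ : C ∈ μ.cells := ((memν C).mp hCm).2.2
  have hCQ : C ≠ Q := ((memν C).mp hCm).1
  -- C is a corner of ν
  have hcorner : IsCornerY ν C := by
    refine ⟨hCm, ?_, ?_⟩
    · -- below
      intro hm
      rw [hC] at hm
      simp only at hm
      rw [show P.1 - 1 + 1 = P.1 by omega] at hm
      obtain ⟨hq, hp, hmem⟩ := (memν _).mp hm
      have h1 : L - 1 < μ.rowLen P.1 := mem_cells_iff_lt_rowLen.mp hmem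
      have h2 := rowLen_of_corner hP
      have h3 : L - 1 = P.2 := by omega
      exact hp (by rw [h3, Prod.mk.eta])
    · -- right
      intro hm
      rw [hC] at hm
      simp only at hm
      rw [mem_cells_iff_lt_rowLen, ← hL] at hm
      omega
  refine ⟨C, hcorner, ?_, ?_⟩
  · -- rltY P C
    left
    simp only [hC, contentY]
    omega
  · -- rltY C Q
    rcases Nat.lt_or_ge Q.1 (P.1 - 1) with hq | hq
    · -- Q strictly above row P.1 - 1
      have h1 : L - 1 < μ.rowLen (P.1 - 1) := mem_cells_iff_lt_rowLen.mp hCμ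
      have h2 : μ.rowLen (P.1 - 1) ≤ μ.rowLen Q.1 := μ.rowLen_anti _ _ (by omega)
      have h3 := rowLen_of_corner hQ
      left
      simp only [hC, contentY]
      omega
    · -- Q.1 = P.1 - 1
      have hq' : Q.1 = P.1 - 1 := by omega
      have h1 : L - 1 < μ.rowLen Q.1 := by
        rw [hq']
        exact mem_cells_iff_lt_rowLen.mp hCμ
      have h2 := rowLen_of_corner hQ
      have h3 : L - 1 ≠ Q.2 := by
        intro h
        exact hCQ (by rw [hC, ← hq', h, Prod.mk.eta])
      left
      simp only [hC, contentY]
      omega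

end Between
section Swap

variable {μ : YoungDiagram} {A1 A2 : ℕ × ℕ}

lemma swap_corners (hA1 : IsCornerY μ A1) (hA2 : IsCornerY μ A2) (hne : A2 ≠ A1)
    (hn3 : 3 ≤ μ.cells.card) :
    ∃ S2 S2', IsStandardYT (eraseY μ A1 hA1) S2 ∧ IsStandardYT (eraseY μ A2 hA2) S2' ∧
      ReachY μ (extY S2 A1 μ.cells.card) (extY S2' A2 μ.cells.card) := by
  set n := μ.cells.card with hn
  have hA2' : IsCornerY (eraseY μ A1 hA1) A2 := corner_eraseY hA1 hA2 hne
  have hA1' : IsCornerY (eraseY μ A2 hA2) A1 := corner_eraseY hA2 hA1 (Ne.symm hne)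
  have hcomm : eraseY (eraseY μ A1 hA1) A2 hA2' = eraseY (eraseY μ A2 hA2) A1 hA1' := by
    apply YoungDiagram.ext
    simp [eraseY, Finset.erase_right_comm]
  -- obtain the between cell C
  have hrow : A1.1 ≠ A2.1 := corner_row_ne hA1 hA2 (Ne.symm hne)
  obtain ⟨C, hC, hbet⟩ : ∃ C, IsCornerY (eraseY (eraseY μ A1 hA1) A2 hA2') C ∧
      ((rltY A1 C ∧ rltY C A2) ∨ (rltY A2 C ∧ rltY C A1)) := by
    rcases Nat.lt_or_ge A2.1 A1.1 with h | h
    · obtain ⟨C, hC, h1, h2⟩ := between_corner hA1 hA2 h hne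
      exact ⟨C, hC, Or.inl ⟨h1, h2⟩⟩
    · obtain ⟨C, hC, h1, h2⟩ := between_corner hA2 hA1 (by omega) (Ne.symm hne)
      rw [eraseY_comm hA2 hA1 (Ne.symm hne)] at hC
      exact ⟨C, hC, Or.inr ⟨h1, h2⟩⟩
  set ν := eraseY (eraseY μ A1 hA1) A2 hA2' with hνdef
  have hm1 : (eraseY μ A1 hA1).cells.card = n - 1 := eraseY_card hA1
  have hm2 : ν.cells.card = n - 2 := by
    rw [hνdef, eraseY_card hA2', hm1]
    omega
  -- the special tableau
  set S1 : ℕ × ℕ → ℕ := extY (UY (eraseY ν C hC)) C ν.cells.card with hS1def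
  have hS1 : IsStandardYT ν S1 := extY_std hC (UY_std _)
  set S2 : ℕ × ℕ → ℕ := extY S1 A2 (eraseY μ A1 hA1).cells.card with hS2def
  have hS2 : IsStandardYT (eraseY μ A1 hA1) S2 := extY_std hA2' hS1
  set S3 : ℕ × ℕ → ℕ := extY S2 A1 μ.cells.card with hS3def
  have hS3 : IsStandardYT μ S3 := extY_std hA1 hS2
  have hS1' : IsStandardYT (eraseY (eraseY μ A2 hA2) A1 hA1') S1 := by
    rw [← hcomm]; exact hS1
  set S2' : ℕ × ℕ → ℕ := extY S1 A1 (eraseY μ A2 hA2).cells.card with hS2'def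
  have hS2' : IsStandardYT (eraseY μ A2 hA2) S2' := extY_std hA1' hS1'
  have hm2' : (eraseY μ A2 hA2).cells.card = n - 1 := eraseY_card hA2
  -- values of S3 at the three special cells
  have hCν : C ∈ ν.cells := hC.1
  have hCA2 : C ≠ A2 := ((mem_eraseY hA2').mp hCν).1
  have hCA1 : C ≠ A1 := ((mem_eraseY hA1).mp (((mem_eraseY hA2').mp hCν).2)).1
  have hS3A1 : S3 A1 = n := by simp [hS3def, extY, hn]
  have hS3A2 : S3 A2 = n - 1 := by
    simp [hS3def, hS2def, extY, if_neg hne, hm1]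
  have hS3C : S3 C = n - 2 := by
    simp [hS3def, hS2def, hS1def, extY, if_neg hCA1, if_neg hCA2, hm2]
  have hS3x : ∀ x, x ≠ A1 → x ≠ A2 → S3 x = S1 x := by
    intro x h1 h2
    simp [hS3def, hS2def, extY, if_neg h1, if_neg h2]
  have hS1small : ∀ x, S1 x ≤ n - 2 := by
    intro x
    by_cases hx : x ∈ ν.cells
    · have := (std_val hS1 hx).2; omega
    · rw [std_zero hS1 hx]; omega
  -- cells of the three top values
  have hxa : cellOfY S3 (n - 1 - 1) = C :=
    cellOfY_unique hS3 (by omega) (by rw [hS3C]; omega)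
  have hxb : cellOfY S3 (n - 1) = A2 :=
    cellOfY_unique hS3 (by omega) (by rw [hS3A2])
  have hxc : cellOfY S3 (n - 1 + 1) = A1 :=
    cellOfY_unique hS3 (by omega) (by rw [hS3A1]; omega)
  -- the move
  have hcond : ¬ (rltY C A2 ∧ rltY A2 A1 ∨ rltY A1 A2 ∧ rltY A2 C) := by
    rcases hbet with ⟨h1, h2⟩ | ⟨h1, h2⟩
    · rintro (⟨-, hx⟩ | ⟨-, hx⟩)
      · exact rltY_asymm (rltY_trans h1 h2) hx
      · exact rltY_asymm h2 hx
    · rintro (⟨hx, -⟩ | ⟨hx, -⟩)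
      · exact rltY_asymm h1 hx
      · exact rltY_asymm (rltY_trans h1 h2) hx
  have hp : (if rltY A2 C ∧ rltY A2 A1 then (if rltY C A1 then n - 1 + 1 else n - 1 - 1)
      else (if rltY C A1 then n - 1 - 1 else n - 1 + 1)) = n - 1 + 1 := by
    rcases hbet with ⟨h1, h2⟩ | ⟨h1, h2⟩
    · rw [if_neg, if_neg]
      · exact fun hx => rltY_asymm h1 hx
      · rintro ⟨hx, -⟩; exact rltY_asymm h2 hx
    · rw [if_pos ⟨h1, rltY_trans h1 h2⟩, if_pos h2]
  have hd : dY S3 (n - 1) =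
      fun x => if S3 x = n - 1 then n else if S3 x = n then n - 1 else S3 x := by
    simp only [dY]
    rw [hxa, hxb, hxc, if_neg hcond, hp, show n - 1 + 1 = n from by omega]
  have hfin : dY S3 (n - 1) = extY S2' A2 μ.cells.card := by
    rw [hd]
    funext x
    by_cases hx2 : x = A2
    · rw [hx2]
      rw [hS3A2, if_pos rfl]
      simp [extY, hn]
    · by_cases hx1 : x = A1
      · rw [hx1]
        rw [hS3A1, if_neg (by omega), if_pos rfl]
        simp [extY, if_neg (show A1 ≠ A2 from Ne.symm hne), hS2'def, hm2']
      · rw [hS3x x hx1 hx2]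
        have := hS1small x
        rw [if_neg (by omega), if_neg (by omega)]
        simp [extY, if_neg hx2, hS2'def, if_neg hx1]
  refine ⟨S2, S2', hS2, hS2', ?_⟩
  have hstep : ReachY μ S3 (dY S3 (n - 1)) :=
    ReachY.step (ReachY.refl S3) hS3 (n - 1) (by omega) (by omega)
  rw [hfin] at hstep
  exact hstep

end Swap
section Connectivity

lemma std_unique_small {μ : YoungDiagram} {T1 T2 : ℕ × ℕ → ℕ} (hn : μ.cells.card ≤ 2)
    (h1 : IsStandardYT μ T1) (h2 : IsStandardYT μ T2) : T1 = T2 := by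
  funext x
  by_cases hx : x ∈ μ.cells
  · have hc1 : 1 ≤ μ.cells.card := Finset.card_pos.mpr ⟨x, hx⟩
    rcases (by omega : μ.cells.card = 1 ∨ μ.cells.card = 2) with hc | hc
    · have v1 := std_val h1 hx
      have v2 := std_val h2 hx
      omega
    · have horig : (0, 0) ∈ μ.cells := by
        rw [YoungDiagram.mem_cells]
        exact μ.up_left_mem (Nat.zero_le _) (Nat.zero_le _) (by simpa using hx)
      have h10 := one_at_origin h1 hc1
      have h20 := one_at_origin h2 hc1
      by_cases hx0 : x = (0, 0)
      · rw [hx0, h10, h20]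
      · have v1 := std_val h1 hx
        have v2 := std_val h2 hx
        have hv1 : T1 x ≠ 1 := by
          intro hv
          exact hx0 (h1.1.injOn hx horig (by rw [hv, h10]))
        have hv2 : T2 x ≠ 1 := by
          intro hv
          exact hx0 (h2.1.injOn hx horig (by rw [hv, h20]))
        omega
  · rw [std_zero h1 hx, std_zero h2 hx]

theorem reach_conn : ∀ n : ℕ, ∀ μ : YoungDiagram, μ.cells.card = n →
    ∀ T1 T2, IsStandardYT μ T1 → IsStandardYT μ T2 → ReachY μ T1 T2 := by
  intro n
  induction n using Nat.strong_induction_on with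
  | _ n ih =>
    intro μ hcard T1 T2 h1 h2
    by_cases hn2 : n ≤ 2
    · rw [std_unique_small (by omega) h1 h2]
      exact ReachY.refl _
    · have hn3 : 3 ≤ n := by omega
      -- key: reach from a tableau to any extension over its top-value corner
      have key : ∀ (T : ℕ × ℕ → ℕ), IsStandardYT μ T → ∀ (A : ℕ × ℕ) (hA : IsCornerY μ A),
          T A = μ.cells.card → ∀ X, IsStandardYT (eraseY μ A hA) X →
          ReachY μ T (extY X A μ.cells.card) ∧ ReachY μ (extY X A μ.cells.card) T := by
        intro T hT A hA hTA X hX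
        have hAcell : cellOfY T μ.cells.card = A := cellOfY_unique hT (by omega) hTA
        subst hAcell
        have hres := resY_std hT (by omega)
        have hext := extY_resY hT (by omega)
        have hecard : (eraseY μ (cellOfY T μ.cells.card) hA).cells.card = n - 1 := by
          rw [eraseY_card hA, hcard]
        have hr1 : ReachY (eraseY μ (cellOfY T μ.cells.card) hA)
            (resY T (cellOfY T μ.cells.card)) X :=
          ih (n - 1) (by omega) _ hecard _ _ hres hX
        have hr2 : ReachY (eraseY μ (cellOfY T μ.cells.card) hA) X
            (resY T (cellOfY T μ.cells.card)) :=
          ih (n - 1) (by omega) _ hecard _ _ hX hres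
        constructor
        · have := ReachY.lift hA hr1
          rwa [hext] at this
        · have := ReachY.lift hA hr2
          rwa [hext] at this
      have hA1 := top_corner h1 (by omega)
      have hA2 := top_corner h2 (by omega)
      have hv1 : T1 (cellOfY T1 μ.cells.card) = μ.cells.card := cellOfY_spec h1 (by omega) le_rfl
      have hv2 : T2 (cellOfY T2 μ.cells.card) = μ.cells.card := cellOfY_spec h2 (by omega) le_rfl
      by_cases hAeq : cellOfY T1 μ.cells.card = cellOfY T2 μ.cells.card
      · -- same corner
        have hres2 := resY_std h2 (by omega)
        have hk := (key T1 h1 _ hA2 (by rw [← hAeq]; exact hv1) _ hres2).1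
        rwa [extY_resY h2 (by omega)] at hk
      · -- different corners
        obtain ⟨S2, S2', hS2, hS2', hreach⟩ :=
          swap_corners hA1 hA2 (fun h => hAeq h.symm) (by omega)
        have hk1 := (key T1 h1 _ hA1 hv1 _ hS2).1
        have hk2 := (key T2 h2 _ hA2 hv2 _ hS2').2
        exact (hk1.trans hreach).trans hk2

end Connectivity


/-- rigidity of standard dual equivalence graphs.  If a bijection
`φ` from `SYT(λ)` to `SYT(μ)` (λ, μ partitions of the same size `n`) preserves
descent sets and intertwines all elementary dual equivalence involutions `d_i`
(`1 < i < n`), then `λ = μ` and `φ` is the identity. -/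
theorem deg_rigidity (lam mu : YoungDiagram) (hn : lam.cells.card = mu.cells.card)
    (φ : (ℕ × ℕ → ℕ) → (ℕ × ℕ → ℕ))
    (hbij : Set.BijOn φ {T | IsStandardYT lam T} {T | IsStandardYT mu T})
    (hdes : ∀ T, IsStandardYT lam T → DesY mu (φ T) = DesY lam T)
    (hint : ∀ T, IsStandardYT lam T → ∀ i : ℕ, 1 < i → i < lam.cells.card →
      φ (dY T i) = dY (φ T) i) :
    lam = mu ∧ ∀ T, IsStandardYT lam T → φ T = T := by
  have hUl : IsStandardYT lam (UY lam) := UY_std lam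
  have hUm : IsStandardYT mu (UY mu) := UY_std mu
  -- direction 1 : mu dominated by lam
  obtain ⟨T0, hT0mem, hT0⟩ := hbij.surjOn (show UY mu ∈ {T | IsStandardYT mu T} from hUm)
  have hT0std : IsStandardYT lam T0 := hT0mem
  have hd0 : DesY lam T0 = DesY mu (UY mu) := by
    rw [← hT0]
    exact (hdes T0 hT0std).symm
  have hside1 : ∀ j, psumY mu j ≤ psumY lam j :=
    psum_le_psum hT0std hd0 (by omega)
  -- direction 2 : lam dominated by mu
  have hφU : IsStandardYT mu (φ (UY lam)) := hbij.mapsTo hUl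
  have hdU : DesY mu (φ (UY lam)) = DesY lam (UY lam) := hdes _ hUl
  have hside2 : ∀ j, psumY lam j ≤ psumY mu j :=
    psum_le_psum hφU hdU (by omega)
  have hshape : lam = mu := shape_eq_of_psum (fun j => le_antisymm (hside2 j) (hside1 j))
  subst hshape
  refine ⟨rfl, ?_⟩
  have hfix : φ (UY lam) = UY lam := eq_UY hφU hdU
  intro T hT
  have hreach : ReachY lam (UY lam) T := reach_conn lam.cells.card lam rfl _ _ hUl hT
  have main : ∀ X Y : ℕ × ℕ → ℕ, ReachY lam X Y → φ X = X → φ Y = Y := by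
    intro X Y h
    induction h with
    | refl => exact id
    | step h hstd i hi1 hi2 ih =>
        intro hX
        rw [hint _ hstd i hi1 hi2, ih hX]
  exact main _ _ hreach hfix
end

section
/- Two standard Young tableaux of partition shapes are dual equivalent (connected by a sequence of elementary dual equivalence moves d_i) if and only if they have the same shape. -/
namespace DEaux

lemma rlt_of_lt {x y : ℕ × ℕ} (h : contentY x < contentY y) : rltY x y := Or.inl h

lemma not_rlt_of_lt {x y : ℕ × ℕ} (h : contentY y < contentY x) : ¬ rltY x y := by
  rintro (h' | ⟨h', _⟩) <;> omega

lemma cellOfY_eq {T : ℕ × ℕ → ℕ} {v : ℕ} {x : ℕ × ℕ} (hx : T x = v)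
    (huniq : ∀ y, T y = v → y = x) : cellOfY T v = x :=
  huniq _ (Classical.epsilon_spec (p := fun c => T c = v) ⟨x, hx⟩)

lemma dY_def (T : ℕ × ℕ → ℕ) (i : ℕ) :
    dY T i =
      if (rltY (cellOfY T (i-1)) (cellOfY T i) ∧ rltY (cellOfY T i) (cellOfY T (i+1))) ∨
         (rltY (cellOfY T (i+1)) (cellOfY T i) ∧ rltY (cellOfY T i) (cellOfY T (i-1))) then T
      else
        (fun x => if T x = i then
            (if rltY (cellOfY T i) (cellOfY T (i-1)) ∧ rltY (cellOfY T i) (cellOfY T (i+1))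
             then (if rltY (cellOfY T (i-1)) (cellOfY T (i+1)) then i+1 else i-1)
             else (if rltY (cellOfY T (i-1)) (cellOfY T (i+1)) then i-1 else i+1))
          else if T x =
            (if rltY (cellOfY T i) (cellOfY T (i-1)) ∧ rltY (cellOfY T i) (cellOfY T (i+1))
             then (if rltY (cellOfY T (i-1)) (cellOfY T (i+1)) then i+1 else i-1)
             else (if rltY (cellOfY T (i-1)) (cellOfY T (i+1)) then i-1 else i+1))
            then i else T x) := rfl

lemma dY_cases (T : ℕ × ℕ → ℕ) (i : ℕ) :
    dY T i = T ∨ ∃ p : ℕ, (p = i - 1 ∨ p = i + 1) ∧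
      dY T i = fun x => if T x = i then p else if T x = p then i else T x := by
  rw [dY_def]
  split
  · exact Or.inl rfl
  · exact Or.inr ⟨_, by split <;> split <;> simp, rfl⟩

lemma dY_eq_zero_iff (T : ℕ × ℕ → ℕ) (i : ℕ) (hi : 1 < i) (x : ℕ × ℕ) :
    dY T i x = 0 ↔ T x = 0 := by
  rcases dY_cases T i with h | ⟨p, hp, h⟩
  · rw [h]
  · rw [h]; dsimp only; split_ifs <;> omega

lemma dY_eq_n_iff (T : ℕ × ℕ → ℕ) (i n : ℕ) (hi : 1 < i) (hn : i + 1 < n) (x : ℕ × ℕ) :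
    dY T i x = n ↔ T x = n := by
  rcases dY_cases T i with h | ⟨p, hp, h⟩
  · rw [h]
  · rw [h]; dsimp only; split_ifs <;> omega

lemma dY_erase (T : ℕ × ℕ → ℕ) (n i : ℕ) (h1 : 1 < i) (h2 : i + 1 < n) :
    dY (fun x => if T x = n then 0 else T x) i
      = fun x => if dY T i x = n then 0 else dY T i x := by
  have hcell : ∀ v, 1 ≤ v → v < n →
      cellOfY (fun x => if T x = n then 0 else T x) v = cellOfY T v := by
    intro v hv1 hv2
    unfold cellOfY
    congr 1
    funext y
    by_cases h : T y = n <;> simp [h] <;> omega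
  rw [dY_def, dY_def, hcell (i-1) (by omega) (by omega), hcell i (by omega) (by omega),
    hcell (i+1) (by omega) (by omega)]
  split
  · rfl
  · dsimp only
    set p := (if rltY (cellOfY T i) (cellOfY T (i-1)) ∧ rltY (cellOfY T i) (cellOfY T (i+1))
             then (if rltY (cellOfY T (i-1)) (cellOfY T (i+1)) then i+1 else i-1)
             else (if rltY (cellOfY T (i-1)) (cellOfY T (i+1)) then i-1 else i+1)) with hp
    have hp2 : p = i - 1 ∨ p = i + 1 := by rw [hp]; split <;> split <;> simp
    funext x
    by_cases hx : T x = n <;> simp only [hx] <;> split_ifs <;>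
      first | omega | exact ‹False›.elim

section Std

variable {L : YoungDiagram} {T : ℕ × ℕ → ℕ}

lemma mem_of_ne_zero (hT : IsStandardYT L T) {x : ℕ × ℕ} (h : T x ≠ 0) : x ∈ L.cells := by
  by_contra hx; exact h (hT.2.1 x hx)

lemma val_bounds (hT : IsStandardYT L T) {x : ℕ × ℕ} (h : x ∈ L.cells) :
    1 ≤ T x ∧ T x ≤ L.cells.card := by
  have := hT.1.1 (Finset.mem_coe.2 h)
  simpa [Set.mem_Icc] using this

lemma value_uniq (hT : IsStandardYT L T) {x : ℕ × ℕ} {v : ℕ} (hx : T x = v) (hv : 1 ≤ v) :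
    ∀ y, T y = v → y = x := by
  intro y hy
  have hxm : x ∈ L.cells := mem_of_ne_zero hT (by omega)
  have hym : y ∈ L.cells := mem_of_ne_zero hT (by omega)
  exact hT.1.2.1 (Finset.mem_coe.2 hym) (Finset.mem_coe.2 hxm) (by rw [hx, hy])

lemma corner_of_max (hT : IsStandardYT L T) {x : ℕ × ℕ} (hm : x ∈ L.cells)
    (hx : T x = L.cells.card) :
    (x.1 + 1, x.2) ∉ L.cells ∧ (x.1, x.2 + 1) ∉ L.cells := by
  obtain ⟨x1, x2⟩ := x
  constructor
  · intro hc
    have hc' : (x1 + 1, x2) ∈ L.cells := hc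
    have h1 := hT.2.2.2 x1 x2 hm hc'
    have h2 := (val_bounds hT hc').2
    omega
  · intro hc
    have hc' : (x1, x2 + 1) ∈ L.cells := hc
    have h1 := hT.2.2.1 x1 x2 hm hc'
    have h2 := (val_bounds hT hc').2
    omega

/-- Erase a removable corner from a Young diagram. -/
def eraseC (L : YoungDiagram) (c : ℕ × ℕ) (h1 : (c.1 + 1, c.2) ∉ L.cells)
    (h2 : (c.1, c.2 + 1) ∉ L.cells) : YoungDiagram where
  cells := L.cells.erase c
  isLowerSet := by
    intro x y hle hx
    simp only [Finset.coe_erase, Set.mem_diff, Set.mem_singleton_iff, Finset.mem_coe] at hx ⊢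
    obtain ⟨hxm, hxc⟩ := hx
    have hxm' : x ∈ L := (YoungDiagram.mem_cells _).1 hxm
    have hym : y ∈ L := L.isLowerSet hle hxm'
    refine ⟨(YoungDiagram.mem_cells _).2 hym, ?_⟩
    intro heq
    rw [← heq] at h1 h2
    obtain ⟨h3, h4⟩ := Prod.le_def.1 hle
    rw [← heq] at hxc
    rcases Nat.lt_or_ge y.1 x.1 with h5 | h5
    · exact h1 ((YoungDiagram.mem_cells _).2
        (YoungDiagram.up_left_mem L h5 h4 hxm'))
    · have h6 : y.1 = x.1 := le_antisymm h3 h5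
      have h7 : y.2 < x.2 := by
        rcases Nat.lt_or_ge y.2 x.2 with h | h
        · exact h
        · exact absurd (Prod.ext h6 (le_antisymm h4 h)).symm hxc
      exact h2 ((YoungDiagram.mem_cells _).2
        (YoungDiagram.up_left_mem L (le_of_eq h6) h7 hxm'))

lemma mem_eraseC {L : YoungDiagram} {c : ℕ × ℕ} {h1 h2} {x : ℕ × ℕ} :
    x ∈ (eraseC L c h1 h2).cells ↔ x ∈ L.cells ∧ x ≠ c := by
  simp only [eraseC, Finset.mem_erase]; tauto

lemma card_eraseC {L : YoungDiagram} {c : ℕ × ℕ} {h1 h2} (hc : c ∈ L.cells) :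
    (eraseC L c h1 h2).cells.card = L.cells.card - 1 :=
  Finset.card_erase_of_mem hc

lemma eraseN_standard (hT : IsStandardYT L T) {c : ℕ × ℕ} (hc : c ∈ L.cells)
    (hval : T c = L.cells.card) {h1 h2} :
    IsStandardYT (eraseC L c h1 h2) (fun x => if T x = L.cells.card then 0 else T x) := by
  set n := L.cells.card with hn
  have hn1 : 1 ≤ n := by
    have := (val_bounds hT hc).1; have := (val_bounds hT hc).2; omega
  have huniq : ∀ y, T y = n → y = c := value_uniq hT hval hn1
  have hne : ∀ x, x ∈ L.cells → x ≠ c → T x ≠ n := by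
    intro x hxm hxc hxn; exact hxc (huniq x hxn)
  have hcard : (eraseC L c h1 h2).cells.card = n - 1 := card_eraseC hc
  refine ⟨⟨?_, ?_, ?_⟩, ?_, ?_, ?_⟩
  · intro x hx
    have hx' := mem_eraseC.1 (Finset.mem_coe.1 hx)
    have hb := val_bounds hT hx'.1
    have := hne x hx'.1 hx'.2
    rw [hcard]
    simp only [Set.mem_Icc]
    rw [if_neg this]
    omega
  · intro x hx y hy hxy
    have hx' := mem_eraseC.1 (Finset.mem_coe.1 hx)
    have hy' := mem_eraseC.1 (Finset.mem_coe.1 hy)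
    simp only [if_neg (hne x hx'.1 hx'.2), if_neg (hne y hy'.1 hy'.2)] at hxy
    exact hT.1.2.1 (Finset.mem_coe.2 hx'.1) (Finset.mem_coe.2 hy'.1) hxy
  · intro v hv
    rw [hcard] at hv
    simp only [Set.mem_Icc] at hv
    have hv' : v ∈ Set.Icc 1 n := by simp only [Set.mem_Icc]; omega
    obtain ⟨x, hxm, hxv⟩ := hT.1.2.2 hv'
    have hxm' : x ∈ L.cells := Finset.mem_coe.1 hxm
    have hxc : x ≠ c := by
      intro h; rw [h, hval] at hxv; omega
    refine ⟨x, Finset.mem_coe.2 (mem_eraseC.2 ⟨hxm', hxc⟩), ?_⟩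
    dsimp only
    rw [if_neg (by omega : ¬ T x = n)]
    exact hxv
  · intro x hx
    by_cases hxc : x = c
    · dsimp only
      rw [hxc, if_pos hval]
    · have hxm : x ∉ L.cells := by
        intro h; exact hx (mem_eraseC.2 ⟨h, hxc⟩)
      dsimp only
      rw [hT.2.1 x hxm, if_neg (by omega : ¬ (0:ℕ) = n)]
  · intro r cc ha hb
    have ha' := mem_eraseC.1 ha
    have hb' := mem_eraseC.1 hb
    simp only [if_neg (hne _ ha'.1 ha'.2), if_neg (hne _ hb'.1 hb'.2)]
    exact hT.2.2.1 r cc ha'.1 hb'.1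
  · intro r cc ha hb
    have ha' := mem_eraseC.1 ha
    have hb' := mem_eraseC.1 hb
    simp only [if_neg (hne _ ha'.1 ha'.2), if_neg (hne _ hb'.1 hb'.2)]
    exact hT.2.2.2 r cc ha'.1 hb'.1

lemma fold_erase (n : ℕ) : ∀ (l : List ℕ) (S : ℕ × ℕ → ℕ), (∀ i ∈ l, 1 < i ∧ i + 1 < n) →
    (l.foldl (fun S i => dY S i) (fun x => if S x = n then 0 else S x)
      = fun x => if (l.foldl (fun S i => dY S i) S) x = n then 0
                 else (l.foldl (fun S i => dY S i) S) x)
    ∧ (∀ x, (l.foldl (fun S i => dY S i) S) x = n ↔ S x = n) := by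
  intro l
  induction l with
  | nil => intro S h; exact ⟨rfl, fun x => Iff.rfl⟩
  | cons i l ih =>
    intro S h
    have hi := h i (List.mem_cons_self)
    have hrest : ∀ j ∈ l, 1 < j ∧ j + 1 < n := fun j hj => h j (List.mem_cons_of_mem _ hj)
    simp only [List.foldl_cons]
    constructor
    · rw [dY_erase S n i hi.1 hi.2]
      exact (ih (dY S i) hrest).1
    · intro x
      rw [(ih (dY S i) hrest).2 x, dY_eq_n_iff S i n hi.1 hi.2 x]

lemma lift_lemma (L : YoungDiagram) (n : ℕ) (hL : L.cells.card = n) (hn : 1 ≤ n)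
    (T U : ℕ × ℕ → ℕ) (hT : IsStandardYT L T) (hU : IsStandardYT L U)
    (c : ℕ × ℕ) (hTc : T c = n) (hUc : U c = n)
    (prev : ∀ (M : YoungDiagram) (T' U' : ℕ × ℕ → ℕ), M.cells.card = n - 1 →
      IsStandardYT M T' → IsStandardYT M U' →
      ∃ l : List ℕ, (∀ i ∈ l, 1 < i ∧ i < n - 1) ∧ l.foldl (fun S i => dY S i) T' = U') :
    ∃ l : List ℕ, (∀ i ∈ l, 1 < i ∧ i < n) ∧ l.foldl (fun S i => dY S i) T = U := by
  have hcm : c ∈ L.cells := mem_of_ne_zero hT (by omega)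
  have hTc' : T c = L.cells.card := by rw [hL]; exact hTc
  have hUc' : U c = L.cells.card := by rw [hL]; exact hUc
  obtain ⟨h1, h2⟩ := corner_of_max hT hcm hTc'
  have hsT := eraseN_standard hT hcm hTc' (h1 := h1) (h2 := h2)
  have hsU := eraseN_standard hU hcm hUc' (h1 := h1) (h2 := h2)
  rw [hL] at hsT hsU
  have hMcard : (eraseC L c h1 h2).cells.card = n - 1 := by
    rw [card_eraseC hcm, hL]
  obtain ⟨l, hb, hfold⟩ := prev (eraseC L c h1 h2) _ _ hMcard hsT hsU
  have hball : ∀ i ∈ l, 1 < i ∧ i + 1 < n := fun i hi => ⟨(hb i hi).1, by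
    have := (hb i hi).2; omega⟩
  have keyT := fold_erase n l T hball
  have uT : ∀ y, T y = n → y = c := by
    rw [← hL]; exact value_uniq hT hTc' (by omega)
  have uU : ∀ y, U y = n → y = c := by
    rw [← hL]; exact value_uniq hU hUc' (by omega)
  refine ⟨l, fun i hi => ⟨(hb i hi).1, by have := (hb i hi).2; omega⟩, ?_⟩
  set F := l.foldl (fun S i => dY S i) T with hF
  have hEq : (fun x => if F x = n then 0 else F x) = fun x => if U x = n then 0 else U x := by
    rw [← keyT.1, hfold]
  funext x
  by_cases hx : T x = n
  · have hxc : x = c := uT x hx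
    rw [hxc, (keyT.2 c).2 (by rw [← hxc]; exact hx), hUc]
  · have hFx : F x ≠ n := fun h => hx ((keyT.2 x).1 h)
    have hUx : U x ≠ n := by
      intro h
      have hxc2 : x = c := uU x h
      rw [hxc2] at hx
      exact hx hTc
    have := congrFun hEq x
    rw [if_neg hFx, if_neg hUx] at this
    exact this

end Std

section Canon

def llt (x y : ℕ × ℕ) : Prop := x.1 < y.1 ∨ (x.1 = y.1 ∧ x.2 < y.2)

instance (x y : ℕ × ℕ) : Decidable (llt x y) :=
  inferInstanceAs (Decidable (_ ∨ _ ∧ _))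

lemma llt_trichotomy {x y : ℕ × ℕ} (h : x ≠ y) : llt x y ∨ llt y x := by
  have h' : x.1 ≠ y.1 ∨ x.2 ≠ y.2 := by
    by_contra hc
    push_neg at hc
    exact h (Prod.ext hc.1 hc.2)
  unfold llt
  omega

lemma llt_trans {x y z : ℕ × ℕ} (h1 : llt x y) (h2 : llt y z) : llt x z := by
  unfold llt at *; omega

lemma llt_irrefl (x : ℕ × ℕ) : ¬ llt x x := by unfold llt; omega

noncomputable def Tcan (M : YoungDiagram) : ℕ × ℕ → ℕ := fun x =>
  if x ∈ M.cells then (M.cells.filter (fun y => llt y x)).card + 1 else 0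

lemma Tcan_lt {M : YoungDiagram} {x y : ℕ × ℕ} (hx : x ∈ M.cells) (hy : y ∈ M.cells)
    (hxy : llt x y) : Tcan M x < Tcan M y := by
  unfold Tcan
  rw [if_pos hx, if_pos hy]
  have hsub : insert x (M.cells.filter (fun z => llt z x)) ⊆
      M.cells.filter (fun z => llt z y) := by
    intro z hz
    rcases Finset.mem_insert.1 hz with rfl | hz
    · exact Finset.mem_filter.2 ⟨hx, hxy⟩
    · obtain ⟨hz1, hz2⟩ := Finset.mem_filter.1 hz
      exact Finset.mem_filter.2 ⟨hz1, llt_trans hz2 hxy⟩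
  have hxnot : x ∉ M.cells.filter (fun z => llt z x) := by
    intro h; exact llt_irrefl x (Finset.mem_filter.1 h).2
  have := Finset.card_le_card hsub
  rw [Finset.card_insert_of_notMem hxnot] at this
  omega

lemma Tcan_standard (M : YoungDiagram) : IsStandardYT M (Tcan M) := by
  have hmapsto : ∀ x ∈ M.cells, 1 ≤ Tcan M x ∧ Tcan M x ≤ M.cells.card := by
    intro x hx
    unfold Tcan
    rw [if_pos hx]
    have hsub : M.cells.filter (fun z => llt z x) ⊆ M.cells.erase x := by
      intro z hz
      obtain ⟨hz1, hz2⟩ := Finset.mem_filter.1 hz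
      refine Finset.mem_erase.2 ⟨?_, hz1⟩
      intro h; rw [h] at hz2; exact llt_irrefl x hz2
    have h1 := Finset.card_le_card hsub
    rw [Finset.card_erase_of_mem hx] at h1
    have h2 : 1 ≤ M.cells.card := Finset.card_pos.2 ⟨x, hx⟩
    omega
  have hinj : Set.InjOn (Tcan M) ↑M.cells := by
    intro x hx y hy hxy
    by_contra hne
    rcases llt_trichotomy hne with h | h
    · exact absurd hxy (Nat.ne_of_lt (Tcan_lt (Finset.mem_coe.1 hx) (Finset.mem_coe.1 hy) h))
    · exact absurd hxy.symm
        (Nat.ne_of_lt (Tcan_lt (Finset.mem_coe.1 hy) (Finset.mem_coe.1 hx) h))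
  refine ⟨⟨?_, hinj, ?_⟩, ?_, ?_, ?_⟩
  · intro x hx
    have := hmapsto x (Finset.mem_coe.1 hx)
    simp only [Set.mem_Icc]
    omega
  · have himg : M.cells.image (Tcan M) = Finset.Icc 1 M.cells.card := by
      apply Finset.eq_of_subset_of_card_le
      · intro v hv
        obtain ⟨x, hx, rfl⟩ := Finset.mem_image.1 hv
        have := hmapsto x hx
        simp only [Finset.mem_Icc]
        omega
      · rw [Finset.card_image_of_injOn hinj, Nat.card_Icc]
        omega
    intro v hv
    simp only [Set.mem_Icc] at hv
    have hv' : v ∈ Finset.Icc 1 M.cells.card := by simp only [Finset.mem_Icc]; omega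
    rw [← himg] at hv'
    obtain ⟨x, hx, hxv⟩ := Finset.mem_image.1 hv'
    exact ⟨x, Finset.mem_coe.2 hx, hxv⟩
  · intro x hx
    unfold Tcan
    rw [if_neg hx]
  · intro r c h1 h2
    exact Tcan_lt h1 h2 (Or.inr ⟨rfl, by omega⟩)
  · intro r c h1 h2
    exact Tcan_lt h1 h2 (Or.inl (by omega))

end Canon

section TwoCorner

lemma two_corner (L : YoungDiagram) (n : ℕ) (hn : L.cells.card = n)
    (c c' : ℕ × ℕ) (hc : c ∈ L.cells) (hc' : c' ∈ L.cells)
    (hc1 : (c.1 + 1, c.2) ∉ L.cells) (hc2 : (c.1, c.2 + 1) ∉ L.cells)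
    (hd1 : (c'.1 + 1, c'.2) ∉ L.cells) (hd2 : (c'.1, c'.2 + 1) ∉ L.cells)
    (hrow : c.1 < c'.1) :
    ∃ V V2 : ℕ × ℕ → ℕ, IsStandardYT L V ∧ IsStandardYT L V2 ∧ V c = n ∧ V2 c' = n ∧
      3 ≤ n ∧ dY V (n-1) = V2 ∧ dY V2 (n-1) = V := by
  classical
  have memL : ∀ (a b : ℕ) (x : ℕ × ℕ), a ≤ x.1 → b ≤ x.2 → x ∈ L.cells → (a, b) ∈ L.cells := by
    intro a b x h1 h2 hx
    exact (YoungDiagram.mem_cells _).2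
      (L.up_left_mem h1 h2 ((YoungDiagram.mem_cells _).1 hx))
  -- column comparison
  have hcol : c'.2 < c.2 := by
    by_contra h
    push_neg at h
    exact hc1 (memL (c.1 + 1) c.2 c' hrow h hc')
  have hk1 : 1 ≤ c.2 := by omega
  have hcne : c ≠ c' := by
    intro h; rw [h] at hrow; omega
  -- the auxiliary corner g
  set A := L.cells.filter (fun y => y.2 = c.2 - 1 ∧ y ≠ c') with hA_def
  have hA : (c.1, c.2 - 1) ∈ A := by
    refine Finset.mem_filter.2 ⟨memL c.1 (c.2 - 1) c le_rfl (by omega) hc, rfl, ?_⟩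
    intro h
    have := congrArg Prod.fst h
    simp only at this
    omega
  have hB : (A.image Prod.fst).Nonempty := ⟨c.1, Finset.mem_image.2 ⟨_, hA, rfl⟩⟩
  set s := (A.image Prod.fst).max' hB with hs_def
  obtain ⟨y0, hy0A, hy0⟩ := Finset.mem_image.1 ((A.image Prod.fst).max'_mem hB)
  obtain ⟨hy0L, hy02, hy0c'⟩ := Finset.mem_filter.1 hy0A
  have hy0eq : y0 = (s, c.2 - 1) := Prod.ext hy0 hy02
  set g : ℕ × ℕ := (s, c.2 - 1) with hg_def
  have hgL : g ∈ L.cells := hy0eq ▸ hy0L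
  have hg_ne' : g ≠ c' := hy0eq ▸ hy0c'
  have hs_ge : c.1 ≤ s := Finset.le_max' _ c.1 (Finset.mem_image.2 ⟨_, hA, rfl⟩)
  have hs_top : ∀ t, (t, c.2 - 1) ∈ L.cells → ((t, c.2 - 1) : ℕ × ℕ) ≠ c' → t ≤ s := by
    intro t h1 h2
    exact Finset.le_max' _ t (Finset.mem_image.2 ⟨(t, c.2 - 1), Finset.mem_filter.2 ⟨h1, rfl, h2⟩, rfl⟩)
  have hg_ne_c : g ≠ c := by
    intro h
    have := congrArg Prod.snd h
    simp only [hg_def] at this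
    omega
  have hgright : (s, c.2) ∈ L.cells → s = c.1 := by
    intro h
    rcases Nat.lt_or_ge c.1 s with h5 | h5
    · exact absurd (memL (c.1 + 1) c.2 (s, c.2) h5 le_rfl h) hc1
    · omega
  have hgdown : ((s + 1, c.2 - 1) : ℕ × ℕ) ∈ L.cells → ((s + 1, c.2 - 1) : ℕ × ℕ) = c' := by
    intro h
    by_contra hne
    have := hs_top (s + 1) h hne
    omega
  have hgpair : g.1 = s ∧ g.2 = c.2 - 1 := ⟨rfl, rfl⟩
  have hs_lt : s < c'.1 := by
    rcases Nat.lt_or_ge s c'.1 with h | h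
    · exact h
    exfalso
    rcases Nat.eq_or_lt_of_le h with heq | hlt
    · -- s = c'.1
      rcases Nat.eq_or_lt_of_le (by omega : c'.2 ≤ c.2 - 1) with h2 | h2
      · exact hg_ne' (by rw [hg_def, ← heq, ← h2])
      · exact hd2 (memL c'.1 (c'.2 + 1) g (by omega) (by omega) hgL)
    · exact hd1 (memL (c'.1 + 1) c'.2 g (by omega) (by omega) hgL)
  -- content comparisons
  have hcc' : contentY c' < contentY c := by
    unfold contentY; omega
  have hgc : contentY g < contentY c := by
    unfold contentY
    rw [hgpair.1, hgpair.2, Nat.cast_sub hk1]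
    push_cast
    omega
  have hc'g : contentY c' < contentY g := by
    unfold contentY
    rw [hgpair.1, hgpair.2, Nat.cast_sub hk1]
    push_cast
    omega
  -- chain of erased diagrams
  have hd1' : (c'.1 + 1, c'.2) ∉ (eraseC L c hc1 hc2).cells := by
    intro h; exact hd1 (mem_eraseC.1 h).1
  have hd2' : (c'.1, c'.2 + 1) ∉ (eraseC L c hc1 hc2).cells := by
    intro h; exact hd2 (mem_eraseC.1 h).1
  set L2 := eraseC (eraseC L c hc1 hc2) c' hd1' hd2' with hL2_def
  have memL2 : ∀ x, x ∈ L2.cells ↔ x ∈ L.cells ∧ x ≠ c ∧ x ≠ c' := by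
    intro x
    rw [hL2_def, mem_eraseC, mem_eraseC]
    tauto
  have hge1 : (g.1 + 1, g.2) ∉ L2.cells := by
    intro h
    obtain ⟨h1, h2, h3⟩ := (memL2 _).1 h
    exact h3 (hgdown h1)
  have hge2 : (g.1, g.2 + 1) ∉ L2.cells := by
    intro h
    obtain ⟨h1, h2, h3⟩ := (memL2 _).1 h
    have hq : (g.1, g.2 + 1) = ((s, c.2) : ℕ × ℕ) := by
      simp only [hg_def]
      exact Prod.ext rfl (by omega)
    rw [hq] at h1 h2
    apply h2
    rw [show c = (c.1, c.2) from rfl]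
    exact Prod.ext (hgright h1) rfl
  set M := eraseC L2 g hge1 hge2 with hM_def
  have memM : ∀ x, x ∈ M.cells ↔ x ∈ L.cells ∧ x ≠ c ∧ x ≠ c' ∧ x ≠ g := by
    intro x
    rw [hM_def, mem_eraseC, memL2]
    tauto
  have hgL2 : g ∈ L2.cells := (memL2 g).2 ⟨hgL, hg_ne_c, hg_ne'⟩
  have hcL2 : c' ∈ (eraseC L c hc1 hc2).cells := mem_eraseC.2 ⟨hc', fun h => hcne h.symm⟩
  have hcardL2 : L2.cells.card = n - 2 := by
    rw [hL2_def, card_eraseC hcL2, card_eraseC hc, hn]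
    omega
  have hn3 : 3 ≤ n := by
    have h1 : 1 ≤ L2.cells.card := Finset.card_pos.2 ⟨g, hgL2⟩
    omega
  have hcardM : M.cells.card = n - 3 := by
    rw [hM_def, card_eraseC hgL2, hcardL2]
    omega
  -- canonical filling of M
  set W := Tcan M with hW_def
  have hW := Tcan_standard M
  have hWb : ∀ x, x ∈ M.cells → 1 ≤ W x ∧ W x ≤ n - 3 := by
    intro x hx
    have := val_bounds hW hx
    rw [hcardM] at this
    exact this
  have hWzero : ∀ x, x ∉ M.cells → W x = 0 := hW.2.1
  have hc'nec : c' ≠ c := fun h => hcne h.symm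
  have hdec : ∀ z, z ∈ L.cells → z = c ∨ z = c' ∨ z = g ∨ z ∈ M.cells := by
    intro z hz
    by_cases h1 : z = c
    · exact Or.inl h1
    by_cases h2 : z = c'
    · exact Or.inr (Or.inl h2)
    by_cases h3 : z = g
    · exact Or.inr (Or.inr (Or.inl h3))
    · exact Or.inr (Or.inr (Or.inr ((memM z).2 ⟨hz, h1, h2, h3⟩)))
  have hgstruct : ∀ vc vc' : ℕ, ((vc = n ∧ vc' = n - 1) ∨ (vc = n - 1 ∧ vc' = n)) →
      IsStandardYT L (fun x => if x = c then vc else if x = c' then vc'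
        else if x = g then n - 2 else W x) := by
    intro vc vc' hvcb
    set F : ℕ × ℕ → ℕ := fun x => if x = c then vc else if x = c' then vc'
        else if x = g then n - 2 else W x with hF_def
    have hFc : F c = vc := by simp only [hF_def, if_pos rfl]
    have hFc' : F c' = vc' := by simp [hF_def, hc'nec]
    have hFg : F g = n - 2 := by simp [hF_def, hg_ne_c, hg_ne']
    have hFM : ∀ x, x ≠ c → x ≠ c' → x ≠ g → F x = W x := by
      intro x h1 h2 h3; simp only [hF_def]; rw [if_neg h1, if_neg h2, if_neg h3]
    refine ⟨⟨?_, ?_, ?_⟩, ?_, ?_, ?_⟩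
    · -- MapsTo
      intro x hx
      have hx' : x ∈ L.cells := Finset.mem_coe.1 hx
      rw [hn]
      simp only [Set.mem_Icc]
      rcases hdec x hx' with rfl | rfl | rfl | hxM
      · rw [hFc]; omega
      · rw [hFc']; omega
      · rw [hFg]; omega
      · obtain ⟨hxL, h1, h2, h3⟩ := (memM x).1 hxM
        rw [hFM x h1 h2 h3]
        have := hWb x hxM
        omega
    · -- InjOn
      intro x hx y hy hxy
      have hx' : x ∈ L.cells := Finset.mem_coe.1 hx
      have hy' : y ∈ L.cells := Finset.mem_coe.1 hy
      rcases hdec x hx' with rfl | rfl | rfl | hxM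
      · rcases hdec y hy' with rfl | rfl | rfl | hyM
        · rfl
        · rw [hFc, hFc'] at hxy; exact absurd hxy (by omega)
        · rw [hFc, hFg] at hxy; exact absurd hxy (by omega)
        · obtain ⟨hyL, k1, k2, k3⟩ := (memM y).1 hyM
          rw [hFc, hFM y k1 k2 k3] at hxy
          have := hWb y hyM
          exact absurd hxy (by omega)
      · rcases hdec y hy' with rfl | rfl | rfl | hyM
        · rw [hFc, hFc'] at hxy; exact absurd hxy (by omega)
        · rfl
        · rw [hFc', hFg] at hxy; exact absurd hxy (by omega)
        · obtain ⟨hyL, k1, k2, k3⟩ := (memM y).1 hyM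
          rw [hFc', hFM y k1 k2 k3] at hxy
          have := hWb y hyM
          exact absurd hxy (by omega)
      · rcases hdec y hy' with rfl | rfl | rfl | hyM
        · rw [hFc, hFg] at hxy; exact absurd hxy.symm (by omega)
        · rw [hFc', hFg] at hxy; exact absurd hxy.symm (by omega)
        · rfl
        · obtain ⟨hyL, k1, k2, k3⟩ := (memM y).1 hyM
          rw [hFg, hFM y k1 k2 k3] at hxy
          have := hWb y hyM
          exact absurd hxy (by omega)
      · obtain ⟨hxL, j1, j2, j3⟩ := (memM x).1 hxM
        have hbx := hWb x hxM
        rcases hdec y hy' with rfl | rfl | rfl | hyM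
        · rw [hFc, hFM x j1 j2 j3] at hxy; exact absurd hxy (by omega)
        · rw [hFc', hFM x j1 j2 j3] at hxy; exact absurd hxy (by omega)
        · rw [hFg, hFM x j1 j2 j3] at hxy; exact absurd hxy (by omega)
        · obtain ⟨hyL, k1, k2, k3⟩ := (memM y).1 hyM
          rw [hFM x j1 j2 j3, hFM y k1 k2 k3] at hxy
          exact hW.1.2.1 (Finset.mem_coe.2 hxM) (Finset.mem_coe.2 hyM) hxy
    · -- SurjOn
      intro v hv
      rw [hn] at hv
      simp only [Set.mem_Icc] at hv
      by_cases h1 : v = n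
      · rcases hvcb with ⟨e1, e2⟩ | ⟨e1, e2⟩
        · exact ⟨c, Finset.mem_coe.2 hc, by rw [hFc, e1, h1]⟩
        · exact ⟨c', Finset.mem_coe.2 hc', by rw [hFc', e2, h1]⟩
      by_cases h2 : v = n - 1
      · rcases hvcb with ⟨e1, e2⟩ | ⟨e1, e2⟩
        · exact ⟨c', Finset.mem_coe.2 hc', by rw [hFc', e2, h2]⟩
        · exact ⟨c, Finset.mem_coe.2 hc, by rw [hFc, e1, h2]⟩
      by_cases h3 : v = n - 2
      · exact ⟨g, Finset.mem_coe.2 hgL, by rw [hFg, h3]⟩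
      · have hv3 : v ∈ Set.Icc 1 M.cells.card := by
          rw [hcardM]; simp only [Set.mem_Icc]; omega
        obtain ⟨x, hxMc, hxv⟩ := hW.1.2.2 hv3
        have hxM : x ∈ M.cells := Finset.mem_coe.1 hxMc
        obtain ⟨hxL, j1, j2, j3⟩ := (memM x).1 hxM
        exact ⟨x, Finset.mem_coe.2 hxL, by rw [hFM x j1 j2 j3]; exact hxv⟩
    · -- vanish
      intro z hz
      have h1 : z ≠ c := fun h => hz (h ▸ hc)
      have h2 : z ≠ c' := fun h => hz (h ▸ hc')
      have h3 : z ≠ g := fun h => hz (h ▸ hgL)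
      rw [hFM z h1 h2 h3]
      exact hWzero z (fun h => hz ((memM z).1 h).1)
    · -- rows
      intro r cc h1 h2
      rcases hdec (r, cc) h1 with hx | hx | hx | hxM
      · obtain ⟨e1, e2⟩ := Prod.ext_iff.1 hx
        simp only at e1 e2
        subst e1; subst e2
        exact absurd h2 hc2
      · obtain ⟨e1, e2⟩ := Prod.ext_iff.1 hx
        simp only at e1 e2
        subst e1; subst e2
        exact absurd h2 hd2
      · obtain ⟨e1, e2⟩ := Prod.ext_iff.1 hx
        simp only at e1 e2
        have e1' : r = s := e1.trans hgpair.1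
        have e2' : cc = c.2 - 1 := e2.trans hgpair.2
        subst e1'; subst e2'
        have ee : c.2 - 1 + 1 = c.2 := by omega
        rw [ee] at h2
        have hq : ((s, c.2) : ℕ × ℕ) = c := by
          rw [hgright h2]
        rw [hx, show ((s, c.2 - 1 + 1) : ℕ × ℕ) = c from by rw [ee]; exact hq, hFg, hFc]
        omega
      · obtain ⟨hxL, j1, j2, j3⟩ := (memM (r, cc)).1 hxM
        have hbx := hWb _ hxM
        rw [hFM _ j1 j2 j3]
        rcases hdec (r, cc + 1) h2 with hy | hy | hy | hyM
        · rw [hy, hFc]; omega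
        · rw [hy, hFc']; omega
        · rw [hy, hFg]; omega
        · obtain ⟨hyL, k1, k2, k3⟩ := (memM (r, cc + 1)).1 hyM
          rw [hFM _ k1 k2 k3]
          exact hW.2.2.1 r cc hxM hyM
    · -- cols
      intro r cc h1 h2
      rcases hdec (r, cc) h1 with hx | hx | hx | hxM
      · obtain ⟨e1, e2⟩ := Prod.ext_iff.1 hx
        simp only at e1 e2
        subst e1; subst e2
        exact absurd h2 hc1
      · obtain ⟨e1, e2⟩ := Prod.ext_iff.1 hx
        simp only at e1 e2
        subst e1; subst e2
        exact absurd h2 hd1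
      · obtain ⟨e1, e2⟩ := Prod.ext_iff.1 hx
        simp only at e1 e2
        have e1' : r = s := e1.trans hgpair.1
        have e2' : cc = c.2 - 1 := e2.trans hgpair.2
        subst e1'; subst e2'
        have hq : ((s + 1, c.2 - 1) : ℕ × ℕ) = c' := hgdown h2
        rw [hx, hq, hFg, hFc']
        omega
      · obtain ⟨hxL, j1, j2, j3⟩ := (memM (r, cc)).1 hxM
        have hbx := hWb _ hxM
        rw [hFM _ j1 j2 j3]
        rcases hdec (r + 1, cc) h2 with hy | hy | hy | hyM
        · rw [hy, hFc]; omega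
        · rw [hy, hFc']; omega
        · rw [hy, hFg]; omega
        · obtain ⟨hyL, k1, k2, k3⟩ := (memM (r + 1, cc)).1 hyM
          rw [hFM _ k1 k2 k3]
          exact hW.2.2.2 r cc hxM hyM
  -- the two tableaux
  set V : ℕ × ℕ → ℕ := fun x => if x = c then n else if x = c' then n - 1
      else if x = g then n - 2 else W x with hV_def
  set V2 : ℕ × ℕ → ℕ := fun x => if x = c then n - 1 else if x = c' then n
      else if x = g then n - 2 else W x with hV2_def
  have hVstd : IsStandardYT L V := hgstruct n (n - 1) (Or.inl ⟨rfl, rfl⟩)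
  have hV2std : IsStandardYT L V2 := hgstruct (n - 1) n (Or.inr ⟨rfl, rfl⟩)
  have hVc : V c = n := by simp only [hV_def, if_pos rfl]
  have hVc' : V c' = n - 1 := by simp [hV_def, hc'nec]
  have hVg : V g = n - 2 := by simp [hV_def, hg_ne_c, hg_ne']
  have hVM : ∀ x, x ≠ c → x ≠ c' → x ≠ g → V x = W x := by
    intro x h1 h2 h3; simp only [hV_def]; rw [if_neg h1, if_neg h2, if_neg h3]
  have hV2c : V2 c = n - 1 := by simp only [hV2_def, if_pos rfl]
  have hV2c' : V2 c' = n := by simp [hV2_def, hc'nec]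
  have hV2g : V2 g = n - 2 := by simp [hV2_def, hg_ne_c, hg_ne']
  have hV2M : ∀ x, x ≠ c → x ≠ c' → x ≠ g → V2 x = W x := by
    intro x h1 h2 h3; simp only [hV2_def]; rw [if_neg h1, if_neg h2, if_neg h3]
  -- reading order facts
  have r1 : rltY c' g := rlt_of_lt hc'g
  have r2 : rltY g c := rlt_of_lt hgc
  have r3 : rltY c' c := rlt_of_lt hcc'
  have nr1 : ¬ rltY g c' := not_rlt_of_lt hc'g
  have nr2 : ¬ rltY c c' := not_rlt_of_lt hcc'
  have nr3 : ¬ rltY c g := not_rlt_of_lt hgc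
  have e1 : n - 1 - 1 = n - 2 := by omega
  have e2 : n - 1 + 1 = n := by omega
  have hWval : ∀ x, W x = 0 ∨ (1 ≤ W x ∧ W x ≤ n - 3) := by
    intro x
    by_cases h : x ∈ M.cells
    · exact Or.inr (hWb x h)
    · exact Or.inl (hWzero x h)
  -- cells of the top values
  have hcVa : cellOfY V (n - 2) = g :=
    cellOfY_eq hVg (value_uniq hVstd hVg (by omega))
  have hcVb : cellOfY V (n - 1) = c' :=
    cellOfY_eq hVc' (value_uniq hVstd hVc' (by omega))
  have hcVc : cellOfY V n = c :=
    cellOfY_eq hVc (value_uniq hVstd hVc (by omega))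
  have hcV2a : cellOfY V2 (n - 2) = g :=
    cellOfY_eq hV2g (value_uniq hV2std hV2g (by omega))
  have hcV2b : cellOfY V2 (n - 1) = c :=
    cellOfY_eq hV2c (value_uniq hV2std hV2c (by omega))
  have hcV2c : cellOfY V2 n = c' :=
    cellOfY_eq hV2c' (value_uniq hV2std hV2c' (by omega))
  have hdYV : dY V (n - 1) = V2 := by
    rw [dY_def, e1, e2, hcVa, hcVb, hcVc]
    rw [if_neg (by rintro (⟨h, -⟩ | ⟨h, -⟩); exacts [nr1 h, nr2 h])]
    rw [if_pos ⟨r1, r3⟩, if_pos r2]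
    funext x
    by_cases h1 : x = c
    · subst h1; rw [hVc, if_neg (by omega : ¬ n = n - 1), if_pos rfl, hV2c]
    by_cases h2 : x = c'
    · subst h2; rw [hVc', if_pos rfl, hV2c']
    by_cases h3 : x = g
    · subst h3
      rw [hVg, if_neg (by omega : ¬ n - 2 = n - 1), if_neg (by omega : ¬ n - 2 = n), hV2g]
    · rw [hVM x h1 h2 h3, hV2M x h1 h2 h3]
      rcases hWval x with h | h
      · rw [h, if_neg (by omega), if_neg (by omega)]
      · rw [if_neg (by omega), if_neg (by omega)]
  have hdYV2 : dY V2 (n - 1) = V := by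
    rw [dY_def, e1, e2, hcV2a, hcV2b, hcV2c]
    rw [if_neg (by rintro (⟨-, h⟩ | ⟨-, h⟩); exacts [nr2 h, nr3 h])]
    rw [if_neg (fun h => nr3 h.1), if_neg nr1]
    funext x
    by_cases h1 : x = c
    · subst h1; rw [hV2c, if_pos rfl, hVc]
    by_cases h2 : x = c'
    · subst h2; rw [hV2c', if_neg (by omega : ¬ n = n - 1), if_pos rfl, hVc']
    by_cases h3 : x = g
    · subst h3
      rw [hV2g, if_neg (by omega : ¬ n - 2 = n - 1), if_neg (by omega : ¬ n - 2 = n), hVg]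
    · rw [hV2M x h1 h2 h3, hVM x h1 h2 h3]
      rcases hWval x with h | h
      · rw [h, if_neg (by omega), if_neg (by omega)]
      · rw [if_neg (by omega), if_neg (by omega)]
  exact ⟨V, V2, hVstd, hV2std, hVc, hV2c', hn3, hdYV, hdYV2⟩

end TwoCorner

theorem trans_aux : ∀ n (L : YoungDiagram), L.cells.card = n →
    ∀ T U, IsStandardYT L T → IsStandardYT L U →
    ∃ l : List ℕ, (∀ i ∈ l, 1 < i ∧ i < n) ∧ l.foldl (fun S i => dY S i) T = U := by
  intro n
  induction n using Nat.strong_induction_on with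
  | _ n IH =>
    intro L hL T U hT hU
    rcases Nat.eq_zero_or_pos n with hn0 | hn1
    · subst hn0
      have hcells : L.cells = ∅ := Finset.card_eq_zero.1 hL
      have hTU : T = U := by
        funext x
        have hx : x ∉ L.cells := by rw [hcells]; exact Finset.notMem_empty x
        rw [hT.2.1 x hx, hU.2.1 x hx]
      exact ⟨[], by simp, hTU⟩
    · have prev : ∀ (M : YoungDiagram) (T' U' : ℕ × ℕ → ℕ), M.cells.card = n - 1 →
          IsStandardYT M T' → IsStandardYT M U' →
          ∃ l : List ℕ, (∀ i ∈ l, 1 < i ∧ i < n - 1) ∧ l.foldl (fun S i => dY S i) T' = U' := by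
        intro M T' U' hcard h1 h2
        exact IH (n - 1) (by omega) M hcard T' U' h1 h2
      have hnIcc : (n : ℕ) ∈ Set.Icc 1 L.cells.card := by
        rw [hL]; simp only [Set.mem_Icc]; omega
      obtain ⟨cT, hcTm, hcTv⟩ := hT.1.2.2 hnIcc
      obtain ⟨cU, hcUm, hcUv⟩ := hU.1.2.2 hnIcc
      have hcTm' : cT ∈ L.cells := Finset.mem_coe.1 hcTm
      have hcUm' : cU ∈ L.cells := Finset.mem_coe.1 hcUm
      obtain ⟨hcT1, hcT2⟩ := corner_of_max hT hcTm' (by rw [hcTv, hL])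
      obtain ⟨hcU1, hcU2⟩ := corner_of_max hU hcUm' (by rw [hcUv, hL])
      by_cases hcc : cT = cU
      · exact lift_lemma L n hL hn1 T U hT hU cT hcTv (by rw [hcc]; exact hcUv) prev
      · have hrne : cT.1 ≠ cU.1 := by
          intro h
          rcases Nat.lt_trichotomy cT.2 cU.2 with h2 | h2 | h2
          · exact hcT2 ((YoungDiagram.mem_cells _).2
              (L.up_left_mem (le_of_eq h) h2 ((YoungDiagram.mem_cells _).1 hcUm')))
          · exact hcc (Prod.ext h h2)
          · exact hcU2 ((YoungDiagram.mem_cells _).2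
              (L.up_left_mem (le_of_eq h.symm) h2 ((YoungDiagram.mem_cells _).1 hcTm')))
        rcases Nat.lt_or_gt_of_ne hrne with hlt | hgt
        · obtain ⟨V, V2, hVstd, hV2std, hVval, hV2val, hn3, hdV, hdV2⟩ :=
            two_corner L n hL cT cU hcTm' hcUm' hcT1 hcT2 hcU1 hcU2 hlt
          obtain ⟨l1, hb1, hf1⟩ := lift_lemma L n hL hn1 T V hT hVstd cT hcTv hVval prev
          obtain ⟨l2, hb2, hf2⟩ := lift_lemma L n hL hn1 V2 U hV2std hU cU hV2val hcUv prev
          refine ⟨l1 ++ (n - 1) :: l2, ?_, ?_⟩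
          · intro i hi
            rcases List.mem_append.1 hi with h | h
            · exact (hb1 i h)
            · rcases List.mem_cons.1 h with rfl | h
              · omega
              · exact (hb2 i h)
          · rw [List.foldl_append, hf1]
            simp only [List.foldl_cons]
            rw [hdV]
            exact hf2
        · obtain ⟨V, V2, hVstd, hV2std, hVval, hV2val, hn3, hdV, hdV2⟩ :=
            two_corner L n hL cU cT hcUm' hcTm' hcU1 hcU2 hcT1 hcT2 hgt
          obtain ⟨l1, hb1, hf1⟩ := lift_lemma L n hL hn1 T V2 hT hV2std cT hcTv hV2val prev
          obtain ⟨l2, hb2, hf2⟩ := lift_lemma L n hL hn1 V U hVstd hU cU hVval hcUv prev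
          refine ⟨l1 ++ (n - 1) :: l2, ?_, ?_⟩
          · intro i hi
            rcases List.mem_append.1 hi with h | h
            · exact (hb1 i h)
            · rcases List.mem_cons.1 h with rfl | h
              · omega
              · exact (hb2 i h)
          · rw [List.foldl_append, hf1]
            simp only [List.foldl_cons]
            rw [hdV2]
            exact hf2

lemma fold_zero_iff : ∀ (l : List ℕ) (S : ℕ × ℕ → ℕ), (∀ i ∈ l, 1 < i) →
    ∀ x, (l.foldl (fun S i => dY S i) S) x = 0 ↔ S x = 0 := by
  intro l
  induction l with
  | nil => intro S h x; exact Iff.rfl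
  | cons i l ih =>
    intro S h x
    simp only [List.foldl_cons]
    rw [ih (dY S i) (fun j hj => h j (List.mem_cons_of_mem _ hj)) x,
      dY_eq_zero_iff S i (h i (List.mem_cons_self)) x]

end DEaux

/-- two standard Young tableaux of partition shapes are dual
equivalent (connected by a sequence of elementary dual equivalence moves
`d_i`, `1 < i < n`) if and only if they have the same shape. -/
theorem dual_equivalent_iff_same_shape (lam mu : YoungDiagram)
    (T U : ℕ × ℕ → ℕ) (hT : IsStandardYT lam T) (hU : IsStandardYT mu U) :
    (∃ l : List ℕ, (∀ i ∈ l, 1 < i ∧ i < lam.cells.card) ∧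
        l.foldl (fun S i => dY S i) T = U) ↔ lam = mu := by
  constructor
  · rintro ⟨l, hb, hf⟩
    rcases Nat.eq_zero_or_pos lam.cells.card with h0 | h1
    · have hl : l = [] := by
        cases l with
        | nil => rfl
        | cons a l => exact absurd ((hb a (List.mem_cons_self)).2) (by omega)
      subst hl
      simp only [List.foldl_nil] at hf
      subst hf
      have hlam : lam.cells = ∅ := Finset.card_eq_zero.1 h0
      have hmu : mu.cells = ∅ := by
        by_contra h
        obtain ⟨x, hx⟩ := Finset.nonempty_iff_ne_empty.2 h
        have hx1 := (DEaux.val_bounds hU hx).1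
        have hz : T x = 0 := hT.2.1 x (by rw [hlam]; exact Finset.notMem_empty x)
        omega
      exact YoungDiagram.ext (by rw [hlam, hmu])
    · have hsupp := DEaux.fold_zero_iff l T (fun i hi => (hb i hi).1)
      rw [hf] at hsupp
      have hcells : lam.cells = mu.cells := by
        ext x
        constructor
        · intro hx
          have hx1 := (DEaux.val_bounds hT hx).1
          have : U x ≠ 0 := by intro h; have := (hsupp x).1 h; omega
          exact DEaux.mem_of_ne_zero hU this
        · intro hx
          have hx1 := (DEaux.val_bounds hU hx).1
          have : T x ≠ 0 := by intro h; have := (hsupp x).2 h; omega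
          exact DEaux.mem_of_ne_zero hT this
      exact YoungDiagram.ext hcells
  · intro h
    subst h
    exact DEaux.trans_aux lam.cells.card lam rfl T U hT hU
end

section
/- The sum of fundamental quasisymmetric functions over standard Young tableaux of a fixed partition shape λ equals the Schur function: s_λ(x) = ∑_{T ∈ SYT(λ)} Q_{Des(T)}(x). -/
/-- `T` is a semistandard Young tableau of shape `μ` (entries ≥ 1 on cells,
zero outside, weakly increasing along rows, strictly increasing down
columns). -/
def IsSSYT (μ : YoungDiagram) (T : ℕ × ℕ → ℕ) : Prop :=
  (∀ c : ℕ × ℕ, c ∉ μ.cells → T c = 0) ∧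
  (∀ c ∈ μ.cells, 1 ≤ T c) ∧
  (∀ r c : ℕ, (r, c) ∈ μ.cells → (r, c + 1) ∈ μ.cells → T (r, c) ≤ T (r, c + 1)) ∧
  (∀ r c : ℕ, (r, c) ∈ μ.cells → (r + 1, c) ∈ μ.cells → T (r, c) < T (r + 1, c))

/-- The number of entries of `T` (on the cells of `μ`) equal to `v`; the
exponent of `x_v` in the monomial `x^T`. -/
def weightY (μ : YoungDiagram) (T : ℕ × ℕ → ℕ) (v : ℕ) : ℕ :=
  (μ.cells.filter fun c => T c = v).card

namespace SchurAux
open Classical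

noncomputable section

variable (μ : YoungDiagram)

def colB : ℕ := (μ.cells.sup fun c => c.2) + 1

def key (S : ℕ × ℕ → ℕ) (c : ℕ × ℕ) : ℕ := S c * colB μ + c.2

def stdT (S : ℕ × ℕ → ℕ) (c : ℕ × ℕ) : ℕ :=
  if c ∈ μ.cells then 1 + (μ.cells.filter fun c' => key μ S c' < key μ S c).card else 0

def invT (T : ℕ × ℕ → ℕ) (j : ℕ) : ℕ × ℕ :=
  if h : ∃ c ∈ μ.cells, T c = j then h.choose else (0, 0)

def gS (S : ℕ × ℕ → ℕ) (j : ℕ) : ℕ :=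
  if 1 ≤ j ∧ j ≤ μ.cells.card then S (invT μ (stdT μ S) j) else 0

variable {μ}

theorem mul_add_lt_iff {N a b a' b' : ℕ} (hb : b < N) (hb' : b' < N) :
    a * N + b < a' * N + b' ↔ a < a' ∨ (a = a' ∧ b < b') := by
  constructor
  · intro h
    rcases lt_trichotomy a a' with h1 | h1 | h1
    · exact Or.inl h1
    · exact Or.inr ⟨h1, by subst h1; omega⟩
    · exfalso
      have : a' * N + N ≤ a * N := by
        calc a' * N + N = (a' + 1) * N := by ring
        _ ≤ a * N := Nat.mul_le_mul_right _ h1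
      omega
  · rintro (h | ⟨rfl, h⟩)
    · have : a * N + N ≤ a' * N := by
        calc a * N + N = (a + 1) * N := by ring
        _ ≤ a' * N := Nat.mul_le_mul_right _ h
      omega
    · omega

theorem col_lt_colB {c : ℕ × ℕ} (hc : c ∈ μ.cells) : c.2 < colB μ :=
  Nat.lt_succ_of_le (Finset.le_sup (f := fun c => c.2) hc)

theorem key_lt_iff {S : ℕ × ℕ → ℕ} {c1 c2 : ℕ × ℕ} (h1 : c1 ∈ μ.cells) (h2 : c2 ∈ μ.cells) :
    key μ S c1 < key μ S c2 ↔ S c1 < S c2 ∨ (S c1 = S c2 ∧ c1.2 < c2.2) :=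
  mul_add_lt_iff (col_lt_colB h1) (col_lt_colB h2)

theorem ssyt_row_le {S : ℕ × ℕ → ℕ} (hS : IsSSYT μ S) {r c1 c2 : ℕ}
    (h2 : (r, c2) ∈ μ.cells) (h : c1 ≤ c2) : S (r, c1) ≤ S (r, c2) := by
  induction c2, h using Nat.le_induction with
  | base => exact le_rfl
  | succ c2 hc2 ih =>
    have hm : (r, c2) ∈ μ.cells := μ.up_left_mem le_rfl (Nat.le_succ _) h2
    exact le_trans (ih hm) (hS.2.2.1 r c2 hm h2)

theorem ssyt_col_lt {S : ℕ × ℕ → ℕ} (hS : IsSSYT μ S) {r1 r2 c : ℕ}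
    (h2 : (r2, c) ∈ μ.cells) (h : r1 < r2) : S (r1, c) < S (r2, c) := by
  induction r2, h using Nat.le_induction with
  | base => exact hS.2.2.2 r1 c (μ.up_left_mem (Nat.le_succ _) le_rfl h2) h2
  | succ r2 hr2 ih =>
    have hm : (r2, c) ∈ μ.cells := μ.up_left_mem (Nat.le_succ _) le_rfl h2
    exact lt_trans (ih hm) (hS.2.2.2 r2 c hm h2)

theorem ssyt_strip {S : ℕ × ℕ → ℕ} (hS : IsSSYT μ S) {c1 c2 : ℕ × ℕ}
    (h1 : c1 ∈ μ.cells) (h2 : c2 ∈ μ.cells) (hv : S c1 = S c2) (hr : c1.1 < c2.1) :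
    c2.2 < c1.2 := by
  by_contra hcol
  push_neg at hcol
  obtain ⟨r1, a1⟩ := c1
  obtain ⟨r2, a2⟩ := c2
  simp only at hr hcol ⊢
  have hm : (r1, a2) ∈ μ.cells := μ.up_left_mem (le_of_lt hr) le_rfl h2
  have := ssyt_row_le hS hm hcol
  have := ssyt_col_lt hS h2 hr
  omega

theorem key_injOn {S : ℕ × ℕ → ℕ} (hS : IsSSYT μ S) {c1 c2 : ℕ × ℕ}
    (h1 : c1 ∈ μ.cells) (h2 : c2 ∈ μ.cells) (h : key μ S c1 = key μ S c2) : c1 = c2 := by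
  have hb1 := col_lt_colB h1
  have hb2 := col_lt_colB h2
  have hk1 : ¬ (key μ S c1 < key μ S c2) := by omega
  have hk2 : ¬ (key μ S c2 < key μ S c1) := by omega
  rw [key_lt_iff h1 h2] at hk1
  rw [key_lt_iff h2 h1] at hk2
  have hv : S c1 = S c2 := by omega
  have hc : c1.2 = c2.2 := by omega
  obtain ⟨r1, a1⟩ := c1
  obtain ⟨r2, a2⟩ := c2
  simp only at hv hc
  subst hc
  rcases lt_trichotomy r1 r2 with hrow | hrow | hrow
  · have := ssyt_col_lt hS h2 hrow
    omega
  · exact Prod.ext hrow rfl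
  · have := ssyt_col_lt hS h1 hrow
    omega

theorem stdT_lt_of_key {S : ℕ × ℕ → ℕ} {c1 c2 : ℕ × ℕ}
    (h1 : c1 ∈ μ.cells) (h2 : c2 ∈ μ.cells) (h : key μ S c1 < key μ S c2) :
    stdT μ S c1 < stdT μ S c2 := by
  rw [stdT, stdT, if_pos h1, if_pos h2]
  have hss : (μ.cells.filter fun c' => key μ S c' < key μ S c1) ⊂
      (μ.cells.filter fun c' => key μ S c' < key μ S c2) := by
    constructor
    · intro c hc
      simp only [Finset.mem_filter] at hc ⊢
      exact ⟨hc.1, lt_trans hc.2 h⟩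
    · intro hsub
      have := hsub (Finset.mem_filter.2 ⟨h1, h⟩)
      simp only [Finset.mem_filter] at this
      exact absurd this.2 (lt_irrefl _)
  exact Nat.add_lt_add_left (Finset.card_lt_card hss) 1

theorem stdT_mem {S : ℕ × ℕ → ℕ} {c : ℕ × ℕ} (hc : c ∈ μ.cells) :
    1 ≤ stdT μ S c ∧ stdT μ S c ≤ μ.cells.card := by
  rw [stdT, if_pos hc]
  constructor
  · omega
  · have hsub : (μ.cells.filter fun c' => key μ S c' < key μ S c) ⊆ μ.cells.erase c := by
      intro x hx
      simp only [Finset.mem_filter] at hx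
      exact Finset.mem_erase.2 ⟨fun he => by subst he; exact absurd hx.2 (lt_irrefl _), hx.1⟩
    have := Finset.card_le_card hsub
    rw [Finset.card_erase_of_mem hc] at this
    have hpos : 0 < μ.cells.card := Finset.card_pos.2 ⟨c, hc⟩
    omega

theorem stdT_injOn {S : ℕ × ℕ → ℕ} (hS : IsSSYT μ S) {c1 c2 : ℕ × ℕ}
    (h1 : c1 ∈ μ.cells) (h2 : c2 ∈ μ.cells) (h : stdT μ S c1 = stdT μ S c2) : c1 = c2 := by
  rcases lt_trichotomy (key μ S c1) (key μ S c2) with hk | hk | hk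
  · exact absurd h (Nat.ne_of_lt (stdT_lt_of_key h1 h2 hk))
  · exact key_injOn hS h1 h2 hk
  · exact absurd h.symm (Nat.ne_of_lt (stdT_lt_of_key h2 h1 hk))

theorem stdT_lt_iff {S : ℕ × ℕ → ℕ} (hS : IsSSYT μ S) {c1 c2 : ℕ × ℕ}
    (h1 : c1 ∈ μ.cells) (h2 : c2 ∈ μ.cells) :
    stdT μ S c1 < stdT μ S c2 ↔ key μ S c1 < key μ S c2 := by
  constructor
  · intro h
    rcases lt_trichotomy (key μ S c1) (key μ S c2) with hk | hk | hk
    · exact hk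
    · exact absurd (key_injOn hS h1 h2 hk) (by rintro rfl; exact absurd h (lt_irrefl _))
    · exact absurd (stdT_lt_of_key h2 h1 hk) (by omega)
  · exact stdT_lt_of_key h1 h2

theorem stdT_surj {S : ℕ × ℕ → ℕ} (hS : IsSSYT μ S) {j : ℕ}
    (hj : j ∈ Finset.Icc 1 μ.cells.card) : ∃ c ∈ μ.cells, stdT μ S c = j := by
  have := Finset.surj_on_of_inj_on_of_card_le (s := μ.cells) (t := Finset.Icc 1 μ.cells.card)
    (fun c _ => stdT μ S c)
    (fun c hc => Finset.mem_Icc.2 (stdT_mem hc))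
    (fun c1 c2 hc1 hc2 h => stdT_injOn hS hc1 hc2 h)
    (by rw [Nat.card_Icc]; omega)
  obtain ⟨c, hc, hcj⟩ := this j hj
  exact ⟨c, hc, hcj.symm⟩

theorem stdT_bijOn {S : ℕ × ℕ → ℕ} (hS : IsSSYT μ S) :
    Set.BijOn (stdT μ S) ↑μ.cells (Set.Icc 1 μ.cells.card) := by
  refine ⟨fun c hc => ?_, fun c1 h1 c2 h2 h => stdT_injOn hS h1 h2 h, fun j hj => ?_⟩
  · exact Set.mem_Icc.2 (stdT_mem hc)
  · obtain ⟨c, hc, hcj⟩ := stdT_surj hS (Finset.mem_Icc.2 (Set.mem_Icc.1 hj))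
    exact ⟨c, hc, hcj⟩

theorem invT_spec {T : ℕ × ℕ → ℕ} {j : ℕ} (h : ∃ c ∈ μ.cells, T c = j) :
    invT μ T j ∈ μ.cells ∧ T (invT μ T j) = j := by
  rw [invT, dif_pos h]
  exact ⟨h.choose_spec.1, h.choose_spec.2⟩

theorem syt_row_lt {T : ℕ × ℕ → ℕ} (hT : IsStandardYT μ T) {r c1 c2 : ℕ}
    (h2 : (r, c2) ∈ μ.cells) (h : c1 < c2) : T (r, c1) < T (r, c2) := by
  induction c2, h using Nat.le_induction with
  | base => exact hT.2.2.1 r c1 (μ.up_left_mem le_rfl (Nat.le_succ _) h2) h2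
  | succ c2 hc2 ih =>
    have hm : (r, c2) ∈ μ.cells := μ.up_left_mem le_rfl (Nat.le_succ _) h2
    exact lt_trans (ih hm) (hT.2.2.1 r c2 hm h2)

theorem syt_col_lt {T : ℕ × ℕ → ℕ} (hT : IsStandardYT μ T) {r1 r2 c : ℕ}
    (h2 : (r2, c) ∈ μ.cells) (h : r1 < r2) : T (r1, c) < T (r2, c) := by
  induction r2, h using Nat.le_induction with
  | base => exact hT.2.2.2 r1 c (μ.up_left_mem (Nat.le_succ _) le_rfl h2) h2
  | succ r2 hr2 ih =>
    have hm : (r2, c) ∈ μ.cells := μ.up_left_mem (Nat.le_succ _) le_rfl h2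
    exact lt_trans (ih hm) (hT.2.2.2 r2 c hm h2)

/-- If `c1` is weakly above-left of `c2` and distinct, then `T c1 < T c2`. -/
theorem syt_lt_of_le_le {T : ℕ × ℕ → ℕ} (hT : IsStandardYT μ T) {c1 c2 : ℕ × ℕ}
    (h2 : c2 ∈ μ.cells) (hr : c1.1 ≤ c2.1) (hc : c1.2 ≤ c2.2) (hne : c1 ≠ c2) :
    T c1 < T c2 := by
  obtain ⟨r1, a1⟩ := c1
  obtain ⟨r2, a2⟩ := c2
  simp only at hr hc
  have hm : (r1, a2) ∈ μ.cells := μ.up_left_mem hr le_rfl h2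
  rcases eq_or_lt_of_le hc with rfl | hc
  · rcases eq_or_lt_of_le hr with rfl | hr
    · exact absurd rfl hne
    · exact syt_col_lt hT h2 hr
  · rcases eq_or_lt_of_le hr with rfl | hr
    · exact syt_row_lt hT h2 hc
    · exact lt_trans (syt_row_lt hT hm hc) (syt_col_lt hT h2 hr)

theorem mem_desY {T : ℕ × ℕ → ℕ} {j : ℕ} :
    j ∈ DesY μ T ↔ (1 ≤ j ∧ j ≤ μ.cells.card - 1) ∧
      ∃ c1 ∈ μ.cells, ∃ c2 ∈ μ.cells, T c1 = j ∧ T c2 = j + 1 ∧ c1.1 < c2.1 := by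
  rw [DesY]
  simp [Finset.mem_filter, Finset.mem_Icc]

/-- Between two entries with the lower one in a strictly lower row there is a descent. -/
theorem exists_descent {T : ℕ × ℕ → ℕ} (hT : IsStandardYT μ T) :
    ∀ k, ∀ b ∈ μ.cells, T b = k → ∀ a ∈ μ.cells, T a < k → a.1 < b.1 →
      ∃ j ∈ DesY μ T, T a ≤ j ∧ j < k := by
  intro k
  induction k using Nat.strong_induction_on with
  | _ k ih =>
    intro b hb hbk a ha hak har
    have haI : T a ∈ Set.Icc 1 μ.cells.card := hT.1.mapsTo ha
    have hbI : T b ∈ Set.Icc 1 μ.cells.card := hT.1.mapsTo hb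
    rw [Set.mem_Icc] at haI hbI
    rcases eq_or_lt_of_le (Nat.succ_le_of_lt hak) with heq | hlt
    · refine ⟨T a, ?_, le_rfl, hak⟩
      rw [mem_desY]
      exact ⟨⟨haI.1, by omega⟩, a, ha, b, hb, rfl, by omega, har⟩
    · -- T a + 1 < k, consider the cell with value k - 1
      have hk1 : k - 1 ∈ Set.Icc 1 μ.cells.card := by rw [Set.mem_Icc]; omega
      obtain ⟨b', hb', hb'k⟩ := hT.1.surjOn hk1
      rcases lt_or_ge b'.1 b.1 with hrow | hrow
      · refine ⟨k - 1, ?_, by omega, by omega⟩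
        rw [mem_desY]
        exact ⟨⟨by omega, by omega⟩, b', hb', b, hb, hb'k, by omega, hrow⟩
      · have har' : a.1 < b'.1 := lt_of_lt_of_le har hrow
        obtain ⟨j, hj, hj1, hj2⟩ := ih (k - 1) (by omega) b' hb' hb'k a ha (by omega) har'
        exact ⟨j, hj, hj1, by omega⟩

theorem g_mono {n : ℕ} {g : ℕ → ℕ} (hg : ∀ j, 1 ≤ j → j + 1 ≤ n → g j ≤ g (j + 1))
    {i j : ℕ} (hi : 1 ≤ i) (hij : i ≤ j) (hj : j ≤ n) : g i ≤ g j := by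
  induction j, hij using Nat.le_induction with
  | base => exact le_rfl
  | succ j hij ih => exact le_trans (ih (by omega)) (hg j (by omega) hj)

theorem invT_std {S : ℕ × ℕ → ℕ} (hS : IsSSYT μ S) {j : ℕ} (h1 : 1 ≤ j)
    (h2 : j ≤ μ.cells.card) :
    invT μ (stdT μ S) j ∈ μ.cells ∧ stdT μ S (invT μ (stdT μ S) j) = j :=
  invT_spec (stdT_surj hS (Finset.mem_Icc.2 ⟨h1, h2⟩))

theorem invT_stdT_self {S : ℕ × ℕ → ℕ} (hS : IsSSYT μ S) {c : ℕ × ℕ} (hc : c ∈ μ.cells) :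
    invT μ (stdT μ S) (stdT μ S c) = c := by
  have hm := stdT_mem (S := S) hc
  have h := invT_std hS hm.1 hm.2
  exact stdT_injOn hS h.1 hc h.2

theorem gS_eq {S : ℕ × ℕ → ℕ} (hS : IsSSYT μ S) {c : ℕ × ℕ} (hc : c ∈ μ.cells) :
    gS μ S (stdT μ S c) = S c := by
  have hm := stdT_mem (S := S) hc
  rw [gS, if_pos ⟨hm.1, hm.2⟩, invT_stdT_self hS hc]

theorem stdT_isStandard {S : ℕ × ℕ → ℕ} (hS : IsSSYT μ S) : IsStandardYT μ (stdT μ S) := by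
  refine ⟨stdT_bijOn hS, fun c hc => by rw [stdT, if_neg hc], ?_, ?_⟩
  · intro r c h1 h2
    refine stdT_lt_of_key h1 h2 ((key_lt_iff h1 h2).2 ?_)
    rcases eq_or_lt_of_le (hS.2.2.1 r c h1 h2) with he | hl
    · exact Or.inr ⟨he, by simp⟩
    · exact Or.inl hl
  · intro r c h1 h2
    exact stdT_lt_of_key h1 h2 ((key_lt_iff h1 h2).2 (Or.inl (hS.2.2.2 r c h1 h2)))

theorem gS_le {S : ℕ × ℕ → ℕ} (hS : IsSSYT μ S) {j : ℕ} (h1 : 1 ≤ j)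
    (h2 : j + 1 ≤ μ.cells.card) : gS μ S j ≤ gS μ S (j + 1) := by
  obtain ⟨hd1, hd1j⟩ := invT_std hS h1 (by omega)
  obtain ⟨hd2, hd2j⟩ := invT_std hS (by omega : 1 ≤ j + 1) h2
  rw [gS, if_pos ⟨h1, by omega⟩, gS, if_pos ⟨by omega, h2⟩]
  have hlt : stdT μ S (invT μ (stdT μ S) j) < stdT μ S (invT μ (stdT μ S) (j + 1)) := by
    rw [hd1j, hd2j]; omega
  have hkey := (stdT_lt_iff hS hd1 hd2).1 hlt
  rcases (key_lt_iff hd1 hd2).1 hkey with h | h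
  · exact le_of_lt h
  · exact le_of_eq h.1

theorem gS_strict_at_descent {S : ℕ × ℕ → ℕ} (hS : IsSSYT μ S) {j : ℕ}
    (hj : j ∈ DesY μ (stdT μ S)) : gS μ S j < gS μ S (j + 1) := by
  rw [mem_desY] at hj
  obtain ⟨⟨hj1, hj2⟩, c1, hc1, c2, hc2, hT1, hT2, hrow⟩ := hj
  have hn : 1 ≤ μ.cells.card := by omega
  have hgj : gS μ S j = S c1 := by rw [← hT1, gS_eq hS hc1]
  have hgj1 : gS μ S (j + 1) = S c2 := by rw [← hT2, gS_eq hS hc2]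
  rw [hgj, hgj1]
  have hlt : stdT μ S c1 < stdT μ S c2 := by omega
  have hkey := (stdT_lt_iff hS hc1 hc2).1 hlt
  rcases (key_lt_iff hc1 hc2).1 hkey with h | h
  · exact h
  · exact absurd (ssyt_strip hS hc1 hc2 h.1 hrow) (by omega)

theorem gS_content {S : ℕ × ℕ → ℕ} (hS : IsSSYT μ S) (v : ℕ) :
    ((Finset.Icc 1 μ.cells.card).filter fun j => gS μ S j = v).card =
      (μ.cells.filter fun c => S c = v).card := by
  refine Finset.card_bij (fun j _ => invT μ (stdT μ S) j) ?_ ?_ ?_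
  · intro j hj
    simp only [Finset.mem_filter, Finset.mem_Icc] at hj
    obtain ⟨⟨h1, h2⟩, hv⟩ := hj
    obtain ⟨hd, hdj⟩ := invT_std hS h1 h2
    refine Finset.mem_filter.2 ⟨hd, ?_⟩
    rw [gS, if_pos ⟨h1, h2⟩] at hv
    exact hv
  · intro j1 hj1 j2 hj2 h
    simp only [Finset.mem_filter, Finset.mem_Icc] at hj1 hj2
    obtain ⟨hd1, hd1j⟩ := invT_std hS hj1.1.1 hj1.1.2
    obtain ⟨hd2, hd2j⟩ := invT_std hS hj2.1.1 hj2.1.2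
    rw [← hd1j, ← hd2j, h]
  · intro c hc
    simp only [Finset.mem_filter] at hc
    have hm := stdT_mem (S := S) hc.1
    refine ⟨stdT μ S c, ?_, invT_stdT_self hS hc.1⟩
    refine Finset.mem_filter.2 ⟨Finset.mem_Icc.2 hm, ?_⟩
    rw [gS_eq hS hc.1, hc.2]

section Psi

variable {T : ℕ × ℕ → ℕ} {g : ℕ → ℕ}

theorem no_rise (hT : IsStandardYT μ T)
    (hgm : ∀ j : ℕ, 1 ≤ j → j + 1 ≤ μ.cells.card → g j ≤ g (j + 1))
    (hgd : ∀ j ∈ DesY μ T, g j < g (j + 1))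
    {c1 c2 : ℕ × ℕ} (hc1 : c1 ∈ μ.cells) (hc2 : c2 ∈ μ.cells)
    (hlt : T c1 < T c2) (heq : g (T c1) = g (T c2)) : c2.1 ≤ c1.1 := by
  by_contra hrow
  push_neg at hrow
  obtain ⟨j, hj, hj1, hj2⟩ := exists_descent hT (T c2) c2 hc2 rfl c1 hc1 hlt hrow
  have hI1 : T c1 ∈ Set.Icc 1 μ.cells.card := hT.1.mapsTo hc1
  have hI2 : T c2 ∈ Set.Icc 1 μ.cells.card := hT.1.mapsTo hc2
  rw [Set.mem_Icc] at hI1 hI2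
  have hjm := (mem_desY.1 hj).1
  have h1 : g (T c1) ≤ g j := g_mono hgm hI1.1 hj1 (by omega)
  have h2 : g j < g (j + 1) := hgd j hj
  have h3 : g (j + 1) ≤ g (T c2) := g_mono hgm (by omega) (by omega) hI2.2
  omega

theorem psi_ssyt (hT : IsStandardYT μ T)
    (hg0 : ∀ j : ℕ, ¬(1 ≤ j ∧ j ≤ μ.cells.card) → g j = 0)
    (hg1 : ∀ j : ℕ, 1 ≤ j → j ≤ μ.cells.card → 1 ≤ g j)
    (hgm : ∀ j : ℕ, 1 ≤ j → j + 1 ≤ μ.cells.card → g j ≤ g (j + 1))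
    (hgd : ∀ j ∈ DesY μ T, g j < g (j + 1)) :
    IsSSYT μ (fun c => g (T c)) := by
  refine ⟨?_, ?_, ?_, ?_⟩
  · intro c hc
    show g (T c) = 0
    rw [hT.2.1 c hc]
    exact hg0 0 (by omega)
  · intro c hc
    have := hT.1.mapsTo hc
    rw [Set.mem_Icc] at this
    exact hg1 _ this.1 this.2
  · intro r c h1 h2
    have hI1 := Set.mem_Icc.1 (hT.1.mapsTo h1)
    have hI2 := Set.mem_Icc.1 (hT.1.mapsTo h2)
    exact g_mono hgm hI1.1 (le_of_lt (hT.2.2.1 r c h1 h2)) hI2.2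
  · intro r c h1 h2
    have hI1 := Set.mem_Icc.1 (hT.1.mapsTo h1)
    have hI2 := Set.mem_Icc.1 (hT.1.mapsTo h2)
    have hlt := hT.2.2.2 r c h1 h2
    have hle : g (T (r, c)) ≤ g (T (r + 1, c)) := by
      rcases eq_or_lt_of_le (le_of_lt hlt) with he | hl
      · omega
      · exact g_mono hgm hI1.1 (le_of_lt hlt) hI2.2
    rcases eq_or_lt_of_le hle with he | hl
    · exact absurd (no_rise hT hgm hgd h1 h2 hlt he) (by omega)
    · exact hl

theorem psi_key (hT : IsStandardYT μ T)
    (hgm : ∀ j : ℕ, 1 ≤ j → j + 1 ≤ μ.cells.card → g j ≤ g (j + 1))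
    (hgd : ∀ j ∈ DesY μ T, g j < g (j + 1))
    {c1 c2 : ℕ × ℕ} (hc1 : c1 ∈ μ.cells) (hc2 : c2 ∈ μ.cells) (hlt : T c1 < T c2) :
    key μ (fun c => g (T c)) c1 < key μ (fun c => g (T c)) c2 := by
  have hI1 := Set.mem_Icc.1 (hT.1.mapsTo hc1)
  have hI2 := Set.mem_Icc.1 (hT.1.mapsTo hc2)
  have hle : g (T c1) ≤ g (T c2) := g_mono hgm hI1.1 (le_of_lt hlt) hI2.2
  refine (key_lt_iff hc1 hc2).2 ?_
  rcases eq_or_lt_of_le hle with he | hl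
  · refine Or.inr ⟨he, ?_⟩
    have hrow : c2.1 ≤ c1.1 := no_rise hT hgm hgd hc1 hc2 hlt he
    by_contra hcol
    push_neg at hcol
    have := syt_lt_of_le_le hT hc1 hrow hcol
      (fun he2 => by rw [he2] at hlt; exact absurd hlt (lt_irrefl _))
    omega
  · exact Or.inl hl

theorem card_filter_lt_T (hT : IsStandardYT μ T) {c : ℕ × ℕ} (hc : c ∈ μ.cells) :
    (μ.cells.filter fun c' => T c' < T c).card = T c - 1 := by
  have hI := Set.mem_Icc.1 (hT.1.mapsTo hc)
  have : (μ.cells.filter fun c' => T c' < T c).card = (Finset.Icc 1 (T c - 1)).card := by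
    refine Finset.card_bij (fun c' _ => T c') ?_ ?_ ?_
    · intro c' hc'
      simp only [Finset.mem_filter] at hc'
      have := Set.mem_Icc.1 (hT.1.mapsTo hc'.1)
      show T c' ∈ Finset.Icc 1 (T c - 1)
      rw [Finset.mem_Icc]
      omega
    · intro a ha b hb h
      simp only [Finset.mem_filter] at ha hb
      exact hT.1.injOn ha.1 hb.1 h
    · intro j hj
      rw [Finset.mem_Icc] at hj
      obtain ⟨c', hc', hc'j⟩ := hT.1.surjOn (Set.mem_Icc.2 ⟨hj.1, by omega⟩ : j ∈ Set.Icc 1 μ.cells.card)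
      exact ⟨c', Finset.mem_filter.2 ⟨hc', by omega⟩, hc'j⟩
  rw [this, Nat.card_Icc]
  omega

theorem stdT_psi (hT : IsStandardYT μ T)
    (hg0 : ∀ j : ℕ, ¬(1 ≤ j ∧ j ≤ μ.cells.card) → g j = 0)
    (hg1 : ∀ j : ℕ, 1 ≤ j → j ≤ μ.cells.card → 1 ≤ g j)
    (hgm : ∀ j : ℕ, 1 ≤ j → j + 1 ≤ μ.cells.card → g j ≤ g (j + 1))
    (hgd : ∀ j ∈ DesY μ T, g j < g (j + 1)) :
    stdT μ (fun c => g (T c)) = T := by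
  have hS : IsSSYT μ (fun c => g (T c)) := psi_ssyt hT hg0 hg1 hgm hgd
  funext c
  by_cases hc : c ∈ μ.cells
  · rw [stdT, if_pos hc]
    have hfe : (μ.cells.filter fun c' => key μ (fun c => g (T c)) c' < key μ (fun c => g (T c)) c)
        = μ.cells.filter fun c' => T c' < T c := by
      refine Finset.filter_congr ?_
      intro c' hc'
      constructor
      · intro hk
        rcases lt_trichotomy (T c') (T c) with h | h | h
        · exact h
        · exact absurd (hT.1.injOn hc' hc h) (by
            rintro rfl
            exact absurd hk (lt_irrefl _))
        · exact absurd (psi_key hT hgm hgd hc hc' h) (by omega)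
      · exact psi_key hT hgm hgd hc' hc
    rw [hfe, card_filter_lt_T hT hc]
    have hI := Set.mem_Icc.1 (hT.1.mapsTo hc)
    omega
  · rw [stdT, if_neg hc, hT.2.1 c hc]

theorem gS_psi (hT : IsStandardYT μ T)
    (hg0 : ∀ j : ℕ, ¬(1 ≤ j ∧ j ≤ μ.cells.card) → g j = 0)
    (hg1 : ∀ j : ℕ, 1 ≤ j → j ≤ μ.cells.card → 1 ≤ g j)
    (hgm : ∀ j : ℕ, 1 ≤ j → j + 1 ≤ μ.cells.card → g j ≤ g (j + 1))
    (hgd : ∀ j ∈ DesY μ T, g j < g (j + 1)) :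
    gS μ (fun c => g (T c)) = g := by
  funext j
  rw [gS, stdT_psi hT hg0 hg1 hgm hgd]
  by_cases hj : 1 ≤ j ∧ j ≤ μ.cells.card
  · rw [if_pos hj]
    obtain ⟨d, hd, hdj⟩ := hT.1.surjOn (Set.mem_Icc.2 hj : j ∈ Set.Icc 1 μ.cells.card)
    obtain ⟨hd', hdj'⟩ := invT_spec (T := T) ⟨d, hd, hdj⟩
    rw [hdj']
  · rw [if_neg hj, (hg0 j hj).symm]

end Psi

theorem psi_content {T : ℕ × ℕ → ℕ} {g : ℕ → ℕ} (hT : IsStandardYT μ T) (v : ℕ) :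
    (μ.cells.filter fun c => g (T c) = v).card =
      ((Finset.Icc 1 μ.cells.card).filter fun j => g j = v).card := by
  refine Finset.card_bij (fun c _ => T c) ?_ ?_ ?_
  · intro c hc
    simp only [Finset.mem_filter] at hc
    have := Set.mem_Icc.1 (hT.1.mapsTo hc.1)
    exact Finset.mem_filter.2 ⟨Finset.mem_Icc.2 this, hc.2⟩
  · intro a ha b hb h
    simp only [Finset.mem_filter] at ha hb
    exact hT.1.injOn ha.1 hb.1 h
  · intro j hj
    simp only [Finset.mem_filter, Finset.mem_Icc] at hj
    obtain ⟨c, hc, hcj⟩ := hT.1.surjOn (Set.mem_Icc.2 hj.1 : j ∈ Set.Icc 1 μ.cells.card)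
    refine ⟨c, Finset.mem_filter.2 ⟨hc, ?_⟩, hcj⟩
    show g (T c) = v
    rw [hcj]
    exact hj.2

theorem gS_pos {S : ℕ × ℕ → ℕ} (hS : IsSSYT μ S) {j : ℕ} (h1 : 1 ≤ j)
    (h2 : j ≤ μ.cells.card) : 1 ≤ gS μ S j := by
  rw [gS, if_pos ⟨h1, h2⟩]
  exact hS.2.1 _ (invT_std hS h1 h2).1

end
end SchurAux


open SchurAux

/-- `s_λ = ∑_{T ∈ SYT(λ)} Q_{Des(T)}`, stated coefficientwise:
for every monomial weight `f`, the number of semistandard tableaux of shape `λ`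
with weight `f` equals the number of pairs `(T, g)` of a standard tableau `T`
of shape `λ` and a weakly increasing sequence `g : [n] → {1,2,…}` that is
strict at each descent of `T` and has content `f`. -/

theorem schur_eq_sum_quasisym (μ : YoungDiagram) (f : ℕ → ℕ) :
    Set.ncard {T : ℕ × ℕ → ℕ | IsSSYT μ T ∧ ∀ v : ℕ, 1 ≤ v → weightY μ T v = f v} =
    Set.ncard {p : (ℕ × ℕ → ℕ) × (ℕ → ℕ) |
      IsStandardYT μ p.1 ∧
      (∀ j : ℕ, ¬(1 ≤ j ∧ j ≤ μ.cells.card) → p.2 j = 0) ∧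
      (∀ j : ℕ, 1 ≤ j → j ≤ μ.cells.card → 1 ≤ p.2 j) ∧
      (∀ j : ℕ, 1 ≤ j → j + 1 ≤ μ.cells.card → p.2 j ≤ p.2 (j + 1)) ∧
      (∀ j ∈ DesY μ p.1, p.2 j < p.2 (j + 1)) ∧
      (∀ v : ℕ, 1 ≤ v →
        ((Finset.Icc 1 μ.cells.card).filter fun j => p.2 j = v).card = f v)} := by
  classical
  set A : Set (ℕ × ℕ → ℕ) :=
    {T : ℕ × ℕ → ℕ | IsSSYT μ T ∧ ∀ v : ℕ, 1 ≤ v → weightY μ T v = f v} with hA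
  set B : Set ((ℕ × ℕ → ℕ) × (ℕ → ℕ)) :=
    {p : (ℕ × ℕ → ℕ) × (ℕ → ℕ) |
      IsStandardYT μ p.1 ∧
      (∀ j : ℕ, ¬(1 ≤ j ∧ j ≤ μ.cells.card) → p.2 j = 0) ∧
      (∀ j : ℕ, 1 ≤ j → j ≤ μ.cells.card → 1 ≤ p.2 j) ∧
      (∀ j : ℕ, 1 ≤ j → j + 1 ≤ μ.cells.card → p.2 j ≤ p.2 (j + 1)) ∧
      (∀ j ∈ DesY μ p.1, p.2 j < p.2 (j + 1)) ∧
      (∀ v : ℕ, 1 ≤ v →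
        ((Finset.Icc 1 μ.cells.card).filter fun j => p.2 j = v).card = f v)} with hB
  have hmapsΦ : Set.MapsTo (fun S => (stdT μ S, gS μ S)) A B := by
    intro S hS
    obtain ⟨h1, h2⟩ := hS
    refine ⟨stdT_isStandard h1, ?_, ?_, ?_, ?_, ?_⟩
    · intro j hj
      show gS μ S j = 0
      rw [gS, if_neg hj]
    · intro j hj1 hj2
      exact gS_pos h1 hj1 hj2
    · intro j hj1 hj2
      exact gS_le h1 hj1 hj2
    · intro j hj
      exact gS_strict_at_descent h1 hj
    · intro v hv
      show ((Finset.Icc 1 μ.cells.card).filter fun j => gS μ S j = v).card = f v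
      rw [gS_content h1 v]
      exact h2 v hv
  have hmapsΨ : Set.MapsTo (fun p : (ℕ × ℕ → ℕ) × (ℕ → ℕ) => fun c => p.2 (p.1 c)) B A := by
    rintro ⟨T, g⟩ ⟨hT, hg0, hg1, hgm, hgd, hw⟩
    refine ⟨psi_ssyt hT hg0 hg1 hgm hgd, ?_⟩
    intro v hv
    show (μ.cells.filter fun c => g (T c) = v).card = f v
    rw [psi_content hT v]
    exact hw v hv
  have hinv : Set.InvOn (fun p : (ℕ × ℕ → ℕ) × (ℕ → ℕ) => fun c => p.2 (p.1 c))
      (fun S => (stdT μ S, gS μ S)) A B := by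
    constructor
    · intro S hS
      obtain ⟨h1, _⟩ := hS
      funext c
      show gS μ S (stdT μ S c) = S c
      by_cases hc : c ∈ μ.cells
      · exact gS_eq h1 hc
      · rw [stdT, if_neg hc, gS, if_neg (by omega), h1.1 c hc]
    · rintro ⟨T, g⟩ ⟨hT, hg0, hg1, hgm, hgd, hw⟩
      show (stdT μ (fun c => g (T c)), gS μ (fun c => g (T c))) = (T, g)
      rw [stdT_psi hT hg0 hg1 hgm hgd, gS_psi hT hg0 hg1 hgm hgd]
  have hbij : Set.BijOn (fun S => (stdT μ S, gS μ S)) A B :=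
    Set.InvOn.bijOn hinv hmapsΦ hmapsΨ
  rw [← Set.ncard_image_of_injOn hbij.injOn, hbij.image_eq]
end
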